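/- arXiv:1706.02734 — 6 statements merged into one kernel-verified Lean document; each statement's English description precedes it below -/
import Mathlib

section
/- Let m ≥ 1 and let u : ℝ³ → ℝ^m be a C¹ map satisfying the inner variation identity on B₆₄(0). Then for every x ∈ ℝ³ and r > 0 with the closed ball B̄_r(x) contained in B₆₄(0), one has D_φ(x,r) = (1/r) ∫_{ℝ³} (∂_{ν_x} u(y) · u(y)) ψ(|x − y|/r) dy. -/
open MeasureTheory Metric

noncomputable section

/-- `ℝ³` as a Euclidean space. -/
abbrev E3 : Type := EuclideanSpace ℝ (Fin 3)

/-- The cutoff function `φ`: `1` on `[0,1/2]`, `2 - 2t` on `[1/2,1]`, `0` on `[1,∞)`. -/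
def phi (t : ℝ) : ℝ := if t ≤ 1/2 then 1 else if t ≤ 1 then 2 - 2*t else 0

/-- The weight `ψ = -φ'` (a.e.): `2` on `(1/2,1)` and `0` otherwise. -/
def psi (t : ℝ) : ℝ := if 1/2 < t ∧ t < 1 then 2 else 0

/-- The standard orthonormal basis of `ℝ³`. -/
def e3 (i : Fin 3) : E3 := EuclideanSpace.basisFun (Fin 3) ℝ i

/-- The radial unit vector field `ν_x(y) = (y - x)/|y - x|`. -/
def nu (x y : E3) : E3 := ‖y - x‖⁻¹ • (y - x)

/-- Squared Frobenius norm of the differential `|∇u(y)|²`. -/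
def gradSq {m : ℕ} (u : E3 → EuclideanSpace ℝ (Fin m)) (y : E3) : ℝ :=
  ∑ i : Fin 3, ‖fderiv ℝ u y (e3 i)‖ ^ 2

/-- Smoothed Dirichlet energy `D_φ(x,r)`. -/
def Dphi {m : ℕ} (u : E3 → EuclideanSpace ℝ (Fin m)) (x : E3) (r : ℝ) : ℝ :=
  ∫ y : E3, gradSq u y * phi (‖x - y‖ / r)

/-- Smoothed height `H_φ(x,r)`. -/
def Hphi {m : ℕ} (u : E3 → EuclideanSpace ℝ (Fin m)) (x : E3) (r : ℝ) : ℝ :=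
  ∫ y : E3, ‖u y‖ ^ 2 * ‖y - x‖⁻¹ * psi (‖x - y‖ / r)

/-- Smoothed remainder `E_φ(x,r)`. -/
def Ephi {m : ℕ} (u : E3 → EuclideanSpace ℝ (Fin m)) (x : E3) (r : ℝ) : ℝ :=
  ∫ y : E3, ‖fderiv ℝ u y (nu x y)‖ ^ 2 * ‖y - x‖ * psi (‖x - y‖ / r)

/-- Smoothed frequency `N_φ(x,r) = r D_φ(x,r)/H_φ(x,r)`. -/
def Nphi {m : ℕ} (u : E3 → EuclideanSpace ℝ (Fin m)) (x : E3) (r : ℝ) : ℝ :=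
  r * Dphi u x r / Hphi u x r

/-- Frequency pinching `W_s^r(x) = N_φ(x,r) - N_φ(x,s)`. -/
def Wpinch {m : ℕ} (u : E3 → EuclideanSpace ℝ (Fin m)) (x : E3) (s r : ℝ) : ℝ :=
  Nphi u x r - Nphi u x s

/-- Classical height: integral of `|u|²` over the sphere `∂B_s(x)` with respect to the
two-dimensional Hausdorff (surface) measure. -/
def sphHeight {m : ℕ} (u : E3 → EuclideanSpace ℝ (Fin m)) (x : E3) (s : ℝ) : ℝ :=
  ∫ y in sphere x s, ‖u y‖ ^ 2 ∂(μH[2])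

/-- `u` satisfies the inner (target) variation identity on `Ω`. -/
def InnerVariation {m : ℕ} (u : E3 → EuclideanSpace ℝ (Fin m)) (Ω : Set E3) : Prop :=
  ∀ f : E3 → ℝ, (∃ K, LipschitzWith K f) → HasCompactSupport f → tsupport f ⊆ Ω →
    (∫ y : E3, ((inner ℝ (gradient (fun z => ‖u z‖ ^ 2 / 2) y) (gradient f y) : ℝ)
      + gradSq u y * f y)) = 0

/-- `u` satisfies the domain variation identity on `Ω`. -/
def DomainVariation {m : ℕ} (u : E3 → EuclideanSpace ℝ (Fin m)) (Ω : Set E3) : Prop :=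
  ∀ X : E3 → E3, (∃ K, LipschitzWith K X) → HasCompactSupport X → tsupport X ⊆ Ω →
    (∫ y : E3, (2 * ∑ i : Fin 3, ∑ j : Fin 3,
        (inner ℝ (fderiv ℝ u y (e3 i)) (fderiv ℝ u y (e3 j)) : ℝ)
          * (inner ℝ (fderiv ℝ X y (e3 i)) (e3 j) : ℝ)
      - gradSq u y * ∑ j : Fin 3, (inner ℝ (fderiv ℝ X y (e3 j)) (e3 j) : ℝ))) = 0

/-- The affine line through `a` in direction `v`. -/
def lineThrough (a v : E3) : Set E3 := {y | ∃ t : ℝ, y = a + t • v}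

/-- Jones-type `β₂` number `D_μ(x,r)`: infimum over affine lines `L` of
`r⁻³ ∫_{B_r(x)} dist(y,L)² dμ(y)`. -/
def JonesD (μ : Measure E3) (x : E3) (r : ℝ) : ℝ :=
  ⨅ p : E3 × {v : E3 // v ≠ 0},
    (∫ y in ball x r, Metric.infDist y (lineThrough p.1 p.2.1) ^ 2 ∂μ) / r ^ 3

/-! ### Auxiliary lemmas for `stmt_0` -/

section Aux

open InnerProductSpace Filter

lemma phi_eq_min_max (t : ℝ) : phi t = min 1 (max 0 (2 - 2*t)) := by
  unfold phi
  split_ifs with h1 h2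
  · rw [max_eq_right (by linarith : (0:ℝ) ≤ 2 - 2*t), min_eq_left (by linarith : (1:ℝ) ≤ 2 - 2*t)]
  · rw [max_eq_right (by linarith : (0:ℝ) ≤ 2 - 2*t), min_eq_right (by linarith : 2 - 2*t ≤ (1:ℝ))]
  · rw [max_eq_left (by linarith : 2 - 2*t ≤ (0:ℝ)), min_eq_right (by norm_num : (0:ℝ) ≤ 1)]

lemma lipschitz_phi : LipschitzWith 2 phi := by
  have h : phi = fun t => min 1 (max 0 (2 - 2*t)) := funext phi_eq_min_max
  rw [h]
  have hlin : LipschitzWith 2 (fun t : ℝ => 2 - 2*t) := by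
    apply LipschitzWith.of_dist_le_mul
    intro a b
    rw [Real.dist_eq, Real.dist_eq]
    have : (2 - 2*a) - (2 - 2*b) = 2 * (b - a) := by ring
    rw [this, abs_mul]
    rw [abs_sub_comm]
    simp [abs_of_nonneg]
  have hmax : LipschitzWith 2 (fun t : ℝ => max 0 (2 - 2*t)) := hlin.const_max 0
  exact hmax.const_min 1

lemma inner_gradient_apply (g : E3 → ℝ) (y v : E3) :
    (inner ℝ (gradient g y) v : ℝ) = fderiv ℝ g y v :=
  InnerProductSpace.toDual_symm_apply

lemma hasGradientAt_norm_sub (x y : E3) (h : y ≠ x) :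
    HasGradientAt (fun z => ‖z - x‖) (nu x y) y := by
  have h0 : y - x ≠ 0 := sub_ne_zero.mpr h
  have h1 : HasFDerivAt (fun z : E3 => z - x) (ContinuousLinearMap.id ℝ E3) y :=
    (hasFDerivAt_id y).sub_const x
  have h2 : HasFDerivAt (fun z : E3 => ‖z - x‖ ^ 2)
      (2 • (innerSL ℝ (y - x)).comp (ContinuousLinearMap.id ℝ E3)) y := h1.norm_sq
  have h3 : ‖y - x‖ ^ 2 ≠ 0 := pow_ne_zero _ (norm_ne_zero_iff.mpr h0)
  have h4 := h2.sqrt h3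
  have h5 : (fun z : E3 => Real.sqrt (‖z - x‖ ^ 2)) = fun z => ‖z - x‖ := by
    funext z; rw [Real.sqrt_sq (norm_nonneg _)]
  rw [h5] at h4
  have h6 : HasGradientAt (fun z : E3 => ‖z - x‖)
      ((1 / (2 * Real.sqrt (‖y - x‖ ^ 2))) • ((2:ℝ) • (y - x))) y := by
    rw [hasGradientAt_iff_hasFDerivAt]
    refine h4.congr_fderiv ?_
    ext v
    simp [InnerProductSpace.toDual_apply_apply, real_inner_smul_left]
  convert h6 using 1
  rw [Real.sqrt_sq (norm_nonneg _), smul_smul]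
  unfold nu
  congr 1
  have : ‖y - x‖ ≠ 0 := norm_ne_zero_iff.mpr h0
  field_simp

lemma fderiv_half_norm_sq {m : ℕ} (u : E3 → EuclideanSpace ℝ (Fin m))
    (hu : ContDiff ℝ 1 u) (y v : E3) :
    fderiv ℝ (fun z => ‖u z‖ ^ 2 / 2) y v = (inner ℝ (fderiv ℝ u y v) (u y) : ℝ) := by
  have hd : HasFDerivAt u (fderiv ℝ u y) y :=
    (hu.differentiable one_ne_zero y).hasFDerivAt
  have h2 : HasFDerivAt (fun z => ‖u z‖ ^ 2)
      (2 • (innerSL ℝ (u y)).comp (fderiv ℝ u y)) y := hd.norm_sq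
  have heq : (fun z => ‖u z‖ ^ 2 / 2) = fun z => (1/2 : ℝ) * ‖u z‖ ^ 2 := by
    funext z; ring
  rw [heq, (h2.const_mul (1/2 : ℝ)).fderiv]
  simp [real_inner_comm]

end Aux

/-- integration-by-parts identity for the smoothed Dirichlet energy. -/
theorem stmt_0 {m : ℕ} (hm : 1 ≤ m) (u : E3 → EuclideanSpace ℝ (Fin m))
    (hu : ContDiff ℝ 1 u) (hiv : InnerVariation u (ball (0 : E3) 64)) :
    ∀ (x : E3) (r : ℝ), 0 < r → closedBall x r ⊆ ball (0 : E3) 64 →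
      Dphi u x r
        = (1 / r) * ∫ y : E3,
            (inner ℝ (fderiv ℝ u y (nu x y)) (u y) : ℝ) * psi (‖x - y‖ / r) := by
  intro x r hr hb
  set f : E3 → ℝ := fun y => phi (‖x - y‖ / r) with hfdef
  -- Lipschitz
  have hdiv_lip : LipschitzWith (Real.toNNReal r⁻¹) (fun y : E3 => ‖x - y‖ / r) := by
    apply LipschitzWith.of_dist_le_mul
    intro a b
    rw [Real.dist_eq, Real.coe_toNNReal _ (le_of_lt (inv_pos.mpr hr))]
    have h1 : ‖x - a‖ / r - ‖x - b‖ / r = (‖x - a‖ - ‖x - b‖) * r⁻¹ := by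
      field_simp
    rw [h1, abs_mul, abs_of_nonneg (le_of_lt (inv_pos.mpr hr)), mul_comm]
    gcongr
    calc |‖x - a‖ - ‖x - b‖| ≤ ‖(x - a) - (x - b)‖ := abs_norm_sub_norm_le _ _
    _ = dist a b := by rw [dist_eq_norm']; congr 1; abel
  have hlipf : LipschitzWith (2 * Real.toNNReal r⁻¹) f := lipschitz_phi.comp hdiv_lip
  -- support
  have hsupp_f : ∀ y : E3, y ∉ closedBall x r → f y = 0 := by
    intro y hy
    have hlt : r < ‖x - y‖ := by
      rw [Metric.mem_closedBall, not_le, dist_eq_norm, norm_sub_rev] at hy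
      exact hy
    show phi (‖x - y‖ / r) = 0
    have h1 : (1:ℝ) < ‖x - y‖ / r := (one_lt_div hr).mpr hlt
    unfold phi
    rw [if_neg (by linarith), if_neg (by linarith)]
  have hcs : HasCompactSupport f :=
    HasCompactSupport.intro (isCompact_closedBall x r) hsupp_f
  have htsupp : tsupport f ⊆ closedBall x r :=
    closure_minimal (Function.support_subset_iff'.mpr hsupp_f) Metric.isClosed_closedBall
  have hiv' := hiv f ⟨_, hlipf⟩ hcs (htsupp.trans hb)
  -- continuity of the gradient of h = |u|²/2
  have hh : ContDiff ℝ 1 (fun z : E3 => ‖u z‖ ^ 2 / 2) := (hu.norm_sq ℝ).div_const 2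
  have hgradh_cont : Continuous (fun y => gradient (fun z : E3 => ‖u z‖ ^ 2 / 2) y) := by
    have h1 : Continuous (fun y => fderiv ℝ (fun z : E3 => ‖u z‖ ^ 2 / 2) y) :=
      hh.continuous_fderiv one_ne_zero
    exact (InnerProductSpace.toDual ℝ E3).symm.continuous.comp h1
  -- gradient of f is measurable, bounded, supported in the ball
  have hgradf_meas : Measurable (fun y => gradient f y) :=
    (InnerProductSpace.toDual ℝ E3).symm.continuous.measurable.comp (measurable_fderiv ℝ f)
  have hgradf_bd : ∀ y, ‖gradient f y‖ ≤ ((2 * Real.toNNReal r⁻¹ : NNReal) : ℝ) := by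
    intro y
    have h1 : ‖gradient f y‖ = ‖fderiv ℝ f y‖ :=
      (InnerProductSpace.toDual ℝ E3).symm.norm_map _
    rw [h1]
    exact norm_fderiv_le_of_lipschitz ℝ hlipf
  have hgradf_supp : ∀ y : E3, r < ‖x - y‖ → gradient f y = 0 := by
    intro y hy
    have hopen : IsOpen {z : E3 | r < ‖x - z‖} :=
      isOpen_lt continuous_const (continuous_const.sub continuous_id).norm
    have hev : f =ᶠ[nhds y] (fun _ => (0:ℝ)) := by
      filter_upwards [hopen.mem_nhds hy] with z hz
      show phi (‖x - z‖ / r) = 0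
      have h1 : (1:ℝ) < ‖x - z‖ / r := (one_lt_div hr).mpr hz
      unfold phi
      rw [if_neg (by linarith), if_neg (by linarith)]
    rw [Filter.EventuallyEq.gradient_eq hev, gradient_fun_const]
  -- integrability of both summands
  have hgradSq_cont : Continuous (gradSq u) := by
    unfold gradSq
    apply continuous_finset_sum
    intro i _
    exact (((hu.continuous_fderiv one_ne_zero).clm_apply continuous_const).norm).pow 2
  have hB_int : Integrable (fun y => gradSq u y * f y) := by
    apply Continuous.integrable_of_hasCompactSupport
    · exact hgradSq_cont.mul hlipf.continuous
    · exact hcs.mul_left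
  obtain ⟨C₁, hC₁⟩ :=
    (isCompact_closedBall x r).exists_bound_of_continuousOn hgradh_cont.continuousOn
  set K : ℝ := ((2 * Real.toNNReal r⁻¹ : NNReal) : ℝ) with hKdef
  have hK0 : 0 ≤ K := NNReal.coe_nonneg _
  have hC₁0 : 0 ≤ C₁ := le_trans (norm_nonneg _) (hC₁ x (mem_closedBall_self (le_of_lt hr)))
  have hA_meas : AEStronglyMeasurable
      (fun y => (inner ℝ (gradient (fun z : E3 => ‖u z‖ ^ 2 / 2) y) (gradient f y) : ℝ)) volume :=
    (hgradh_cont.measurable.inner hgradf_meas).aestronglyMeasurable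
  have hA_int : Integrable
      (fun y => (inner ℝ (gradient (fun z : E3 => ‖u z‖ ^ 2 / 2) y) (gradient f y) : ℝ)) := by
    apply Integrable.mono'
      (g := (closedBall x r).indicator (fun _ => C₁ * K))
      ?_ hA_meas
    · apply Filter.Eventually.of_forall
      intro y
      by_cases hy : y ∈ closedBall x r
      · rw [Set.indicator_of_mem hy]
        calc ‖(inner ℝ (gradient (fun z : E3 => ‖u z‖ ^ 2 / 2) y) (gradient f y) : ℝ)‖
            ≤ ‖gradient (fun z : E3 => ‖u z‖ ^ 2 / 2) y‖ * ‖gradient f y‖ := norm_inner_le_norm _ _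
          _ ≤ C₁ * K := by
              apply mul_le_mul (hC₁ y hy) (hgradf_bd y) (norm_nonneg _) hC₁0
      · rw [Set.indicator_of_notMem hy]
        have hlt : r < ‖x - y‖ := by
          rw [Metric.mem_closedBall, not_le, dist_eq_norm, norm_sub_rev] at hy
          exact hy
        rw [hgradf_supp y hlt, inner_zero_right]
        simp
    · rw [integrable_indicator_iff measurableSet_closedBall]
      exact integrableOn_const measure_closedBall_lt_top.ne
  rw [MeasureTheory.integral_add hA_int hB_int] at hiv'
  -- a.e. identification of the first integrand
  have hs0 : volume (sphere x (r/2) ∪ sphere x r) = 0 :=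
    measure_union_null (Measure.addHaar_sphere volume x _) (Measure.addHaar_sphere volume x _)
  have hae : (fun y => (inner ℝ (gradient (fun z : E3 => ‖u z‖ ^ 2 / 2) y) (gradient f y) : ℝ))
      =ᵐ[volume] fun y =>
        (-(1/r)) * ((inner ℝ (fderiv ℝ u y (nu x y)) (u y) : ℝ) * psi (‖x - y‖ / r)) := by
    filter_upwards [measure_eq_zero_iff_ae_notMem.mp hs0] with y hy
    have hy1 : ‖x - y‖ ≠ r/2 := by
      intro hc
      exact hy (Or.inl (by rw [Metric.mem_sphere, dist_eq_norm, norm_sub_rev]; exact hc))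
    have hy2 : ‖x - y‖ ≠ r := by
      intro hc
      exact hy (Or.inr (by rw [Metric.mem_sphere, dist_eq_norm, norm_sub_rev]; exact hc))
    rcases lt_trichotomy (‖x - y‖) (r/2) with h | h | h
    · -- inner region : f locally constant 1
      have hopen : IsOpen {z : E3 | ‖x - z‖ < r/2} :=
        isOpen_lt (continuous_const.sub continuous_id).norm continuous_const
      have hev : f =ᶠ[nhds y] (fun _ => (1:ℝ)) := by
        filter_upwards [hopen.mem_nhds h] with z hz
        show phi (‖x - z‖ / r) = 1
        have h1 : ‖x - z‖ / r ≤ 1/2 := by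
          rw [div_le_iff₀ hr]; linarith
        unfold phi
        rw [if_pos h1]
      have hgrad0 : gradient f y = 0 := by
        rw [Filter.EventuallyEq.gradient_eq hev, gradient_fun_const]
      have hpsi0 : psi (‖x - y‖ / r) = 0 := by
        unfold psi
        rw [if_neg]
        rintro ⟨h1, -⟩
        rw [lt_div_iff₀ hr] at h1
        linarith
      rw [hgrad0, hpsi0, inner_zero_right]
      ring
    · exact absurd h hy1
    rcases lt_trichotomy (‖x - y‖) r with h2 | h2 | h2
    · -- annulus
      have hyx : y ≠ x := by
        intro hc
        rw [hc, sub_self, norm_zero] at h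
        linarith
      have hopen : IsOpen {z : E3 | r/2 < ‖x - z‖ ∧ ‖x - z‖ < r} :=
        IsOpen.inter (isOpen_lt continuous_const (continuous_const.sub continuous_id).norm)
          (isOpen_lt (continuous_const.sub continuous_id).norm continuous_const)
      have hev : f =ᶠ[nhds y] (fun z => 2 - (2/r) * ‖z - x‖) := by
        filter_upwards [hopen.mem_nhds ⟨h, h2⟩] with z hz
        obtain ⟨hz1, hz2⟩ := hz
        show phi (‖x - z‖ / r) = 2 - (2/r) * ‖z - x‖
        have ht1 : ¬(‖x - z‖ / r ≤ 1/2) := by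
          rw [not_le, lt_div_iff₀ hr]; linarith
        have ht2 : ‖x - z‖ / r ≤ 1 := by
          rw [div_le_one hr]; linarith
        unfold phi
        rw [if_neg ht1, if_pos ht2, show ‖z - x‖ = ‖x - z‖ from norm_sub_rev z x]
        field_simp
      have hgf : HasGradientAt (fun z : E3 => 2 - (2/r) * ‖z - x‖) ((-(2/r)) • nu x y) y := by
        have h2' : HasFDerivAt (fun z : E3 => ‖z - x‖)
            (InnerProductSpace.toDual ℝ E3 (nu x y)) y :=
          (hasGradientAt_norm_sub x y hyx).hasFDerivAt
        have h3 : HasFDerivAt (fun z : E3 => 2 - (2/r) * ‖z - x‖)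
            ((-(2/r)) • InnerProductSpace.toDual ℝ E3 (nu x y)) y := by
          have h4 := (h2'.const_mul (2/r)).const_sub 2
          refine h4.congr_fderiv ?_
          rw [neg_smul]
        rw [hasGradientAt_iff_hasFDerivAt]
        refine h3.congr_fderiv ?_
        ext v
        simp [InnerProductSpace.toDual_apply_apply, real_inner_smul_left]
      have hgrad : gradient f y = (-(2/r)) • nu x y := by
        rw [Filter.EventuallyEq.gradient_eq hev]
        exact hgf.gradient
      have hpsi : psi (‖x - y‖ / r) = 2 := by
        unfold psi
        rw [if_pos ⟨by rw [lt_div_iff₀ hr]; linarith, by rw [div_lt_one hr]; exact h2⟩]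
      rw [hgrad, real_inner_smul_right, inner_gradient_apply, fderiv_half_norm_sq u hu, hpsi]
      ring
    · exact absurd h2 hy2
    · -- outer region
      have hgrad0 : gradient f y = 0 := hgradf_supp y h2
      have hpsi0 : psi (‖x - y‖ / r) = 0 := by
        unfold psi
        rw [if_neg]
        rintro ⟨-, h1⟩
        rw [div_lt_one hr] at h1
        linarith
      rw [hgrad0, hpsi0, inner_zero_right]
      ring
  rw [integral_congr_ae hae, MeasureTheory.integral_const_mul, neg_mul] at hiv'
  have hD : Dphi u x r = ∫ y : E3, gradSq u y * f y := rfl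
  rw [hD]
  linarith
end
end

section
/- Let m ≥ 1 and let u : ℝ³ → ℝ^m be a C¹ map satisfying the domain variation identity on B₆₄(0). Then for every x ∈ ℝ³ and r > 0 with the closed ball B̄_r(x) contained in B₆₄(0), the function r ↦ D_φ(x,r) is differentiable at r and ∂_r D_φ(x,r) = D_φ(x,r)/r + 2 E_φ(x,r)/r². -/
open MeasureTheory Metric

noncomputable section

lemma phi_eq (t : ℝ) : phi t = max 0 (min 1 (2 - 2*t)) := by
  unfold phi
  rcases le_or_gt t (1/2) with h | h
  · rw [if_pos h, min_eq_left (by linarith), max_eq_right (by norm_num)]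
  · rw [if_neg (not_le.2 h)]
    rcases le_or_gt t 1 with h2 | h2
    · rw [if_pos h2, min_eq_right (by linarith), max_eq_right (by linarith)]
    · rw [if_neg (not_le.2 h2), max_eq_left (min_le_of_right_le (by linarith))]

lemma phi_nonneg (t : ℝ) : 0 ≤ phi t := by rw [phi_eq]; exact le_max_left _ _
lemma phi_le_one (t : ℝ) : phi t ≤ 1 := by
  rw [phi_eq]; exact max_le (by norm_num) (min_le_left _ _)
lemma phi_of_ge (t : ℝ) (h : 1 ≤ t) : phi t = 0 := by
  rw [phi_eq, max_eq_left (min_le_of_right_le (by linarith))]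
lemma phi_of_le (t : ℝ) (h : t ≤ 1/2) : phi t = 1 := by unfold phi; rw [if_pos h]
lemma phi_of_mem (t : ℝ) (h1 : 1/2 < t) (h2 : t < 1) : phi t = 2 - 2*t := by
  unfold phi; rw [if_neg (not_le.2 h1), if_pos h2.le]
lemma psi_of_mem (t : ℝ) (h1 : 1/2 < t) (h2 : t < 1) : psi t = 2 := by
  unfold psi; rw [if_pos ⟨h1, h2⟩]
lemma psi_of_le (t : ℝ) (h : t ≤ 1/2) : psi t = 0 := by
  unfold psi; rw [if_neg]; rintro ⟨h1, -⟩; linarith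
lemma psi_of_ge (t : ℝ) (h : 1 ≤ t) : psi t = 0 := by
  unfold psi; rw [if_neg]; rintro ⟨-, h2⟩; linarith

lemma abs_phi_sub_phi (s t : ℝ) : |phi s - phi t| ≤ 2 * |s - t| := by
  rw [phi_eq, phi_eq]
  have h1 : |max 0 (min 1 (2-2*s)) - max 0 (min 1 (2-2*t))|
      ≤ |min 1 (2-2*s) - min 1 (2-2*t)| := by
    rw [max_comm 0 _, max_comm 0 _]; exact abs_max_sub_max_le_abs _ _ _
  have h2 : |min 1 (2-2*s) - min 1 (2-2*t)| ≤ |(2-2*s) - (2-2*t)| := by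
    have e : ∀ A : ℝ, min 1 A = - max (-A) (-1) := by
      intro A; rw [max_comm, max_neg_neg, neg_neg]
    rw [e, e, neg_sub_neg]
    calc |max (-(2-2*t)) (-1) - max (-(2-2*s)) (-1)| ≤ |(-(2-2*t)) - (-(2-2*s))| :=
        abs_max_sub_max_le_abs _ _ _
      _ = |(2-2*s) - (2-2*t)| := by rw [neg_sub_neg, abs_sub_comm]
  refine (h1.trans h2).trans ?_
  have : (2-2*s) - (2-2*t) = 2*(t-s) := by ring
  rw [this, abs_mul, abs_two, abs_sub_comm]

lemma continuous_phi : Continuous phi := by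
  have : LipschitzWith 2 phi := by
    apply LipschitzWith.of_dist_le_mul
    intro s t
    rw [Real.dist_eq, Real.dist_eq]
    simpa using abs_phi_sub_phi s t
  exact this.continuous

lemma hasFDerivAt_norm_sub (x : E3) {y : E3} (h : y ≠ x) :
    HasFDerivAt (fun z : E3 => ‖z - x‖) (‖y - x‖⁻¹ • (innerSL ℝ (y - x))) y := by
  have hyx : y - x ≠ 0 := sub_ne_zero.2 h
  have hn : ‖y - x‖ ≠ 0 := norm_ne_zero_iff.2 hyx
  have h1 : HasFDerivAt (fun z : E3 => (inner ℝ (z - x) (z - x) : ℝ))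
      ((fderivInnerCLM ℝ (y - x, y - x)).comp
        ((ContinuousLinearMap.id ℝ E3).prod (ContinuousLinearMap.id ℝ E3))) y := by
    have hid : HasFDerivAt (fun z : E3 => z - x) (ContinuousLinearMap.id ℝ E3) y :=
      (hasFDerivAt_id y).sub_const x
    exact hid.inner ℝ hid
  have hne : (inner ℝ (y - x) (y - x) : ℝ) ≠ 0 := by
    rw [real_inner_self_eq_norm_sq]; positivity
  have h2 : HasDerivAt Real.sqrt (1 / (2 * Real.sqrt (inner ℝ (y - x) (y - x) : ℝ)))
      ((fun z : E3 => (inner ℝ (z - x) (z - x) : ℝ)) y) := Real.hasDerivAt_sqrt hne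
  have h3 := h2.comp_hasFDerivAt y h1
  have heq : Real.sqrt ∘ (fun z : E3 => (inner ℝ (z - x) (z - x) : ℝ)) = fun z : E3 => ‖z - x‖ := by
    funext z; simp only [Function.comp_apply]; rw [real_inner_self_eq_norm_sq, Real.sqrt_sq (norm_nonneg _)]
  rw [show Real.sqrt ∘ (fun z : E3 => (inner ℝ (z - x) (z - x) : ℝ)) = fun z : E3 => ‖z - x‖ from heq] at h3
  refine h3.congr_fderiv (Eq.symm ?_)
  ext v
  simp only [ContinuousLinearMap.smul_apply, innerSL_apply_apply, ContinuousLinearMap.coe_comp',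
    Function.comp_apply, ContinuousLinearMap.prod_apply, ContinuousLinearMap.coe_id', id_eq,
    fderivInnerCLM_apply, real_inner_self_eq_norm_sq, Real.sqrt_sq (norm_nonneg _)]
  rw [real_inner_comm v (y - x)]
  field_simp
  ring
lemma inner_e3_right (w : E3) (i : Fin 3) : (inner ℝ w (e3 i) : ℝ) = w i := by
  simp [e3, EuclideanSpace.basisFun_apply, PiLp.inner_apply, EuclideanSpace.single_apply]

lemma inner_e3 (i j : Fin 3) : (inner ℝ (e3 i) (e3 j) : ℝ) = if i = j then 1 else 0 := by
  simp [e3, EuclideanSpace.basisFun_apply, PiLp.inner_apply, EuclideanSpace.single_apply]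

lemma sum_coord_smul (w : E3) : ∑ i : Fin 3, w i • e3 i = w := by
  ext j
  rw [show ((∑ i : Fin 3, w i • e3 i) j) = ∑ i : Fin 3, (w i • e3 i) j from by
    rw [WithLp.ofLp_sum]; exact Finset.sum_apply j _ _]
  simp [e3, EuclideanSpace.basisFun_apply, PiLp.smul_apply, EuclideanSpace.single_apply]

lemma norm_sq_eq_sum_coord (w : E3) : ‖w‖ ^ 2 = ∑ i : Fin 3, (w i) ^ 2 := by
  rw [← real_inner_self_eq_norm_sq, PiLp.inner_apply]
  simp [sq]

lemma clm_apply_expand {F : Type*} [NormedAddCommGroup F] [NormedSpace ℝ F]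
    (L : E3 →L[ℝ] F) (w : E3) :
    L w = ∑ i : Fin 3, w i • L (e3 i) := by
  conv_lhs => rw [← sum_coord_smul w]
  simp [map_sum, _root_.map_smul]

lemma norm_sq_sum_smul {m : ℕ} (c : Fin 3 → ℝ) (g : Fin 3 → EuclideanSpace ℝ (Fin m)) :
    ‖∑ i : Fin 3, c i • g i‖ ^ 2
      = ∑ i : Fin 3, ∑ j : Fin 3, c i * c j * (inner ℝ (g i) (g j) : ℝ) := by
  rw [← real_inner_self_eq_norm_sq, sum_inner]
  refine Finset.sum_congr rfl fun i _ => ?_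
  rw [real_inner_smul_left, inner_sum, Finset.mul_sum]
  refine Finset.sum_congr rfl fun j _ => ?_
  rw [real_inner_smul_right]; ring

/-- The test vector field. -/
def Xc (x : E3) (r : ℝ) (z : E3) : E3 := phi (‖x - z‖ / r) • (z - x)

lemma fderiv_Xc_mid (x : E3) {r : ℝ} (hr : 0 < r) {y : E3}
    (h1 : r/2 < ‖y - x‖) (h2 : ‖y - x‖ < r) (i j : Fin 3) :
    (inner ℝ (fderiv ℝ (Xc x r) y (e3 i)) (e3 j) : ℝ)
      = (2 - 2*(‖y - x‖/r)) * (if i = j then 1 else 0)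
        - 2/r * ‖y - x‖⁻¹ * ((y - x) i * (y - x) j) := by
  have hyx : y ≠ x := by
    intro h; rw [h, sub_self, norm_zero] at h1; linarith
  set G : E3 → E3 := fun z => (2 - 2*(‖z - x‖/r)) • (z - x) with hG
  have hU : IsOpen {z : E3 | r/2 < ‖z - x‖ ∧ ‖z - x‖ < r} := by
    have : Continuous fun z : E3 => ‖z - x‖ := (continuous_id.sub continuous_const).norm
    exact (isOpen_Ioo (a := r/2) (b := r)).preimage this
  have hmem : y ∈ {z : E3 | r/2 < ‖z - x‖ ∧ ‖z - x‖ < r} := ⟨h1, h2⟩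
  have hEq : Xc x r =ᶠ[nhds y] G := by
    filter_upwards [hU.mem_nhds hmem] with z hz
    have h1' : 1/2 < ‖x - z‖ / r := by
      rw [norm_sub_rev]; rw [lt_div_iff₀ hr]; linarith [hz.1]
    have h2' : ‖x - z‖ / r < 1 := by
      rw [norm_sub_rev]; rw [div_lt_one hr]; exact hz.2
    show phi (‖x - z‖ / r) • (z - x) = _
    rw [phi_of_mem _ h1' h2', norm_sub_rev x z]
  -- derivative of G at y
  have hid : HasFDerivAt (fun z : E3 => z - x) (ContinuousLinearMap.id ℝ E3) y :=
    (hasFDerivAt_id y).sub_const x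
  have hnorm := hasFDerivAt_norm_sub x hyx
  have hc : HasFDerivAt (fun z : E3 => 2 - 2*(‖z - x‖/r))
      ((-(2/r)) • (‖y - x‖⁻¹ • (innerSL ℝ (y - x)))) y := by
    have h' : HasFDerivAt (fun z : E3 => 2 - 2/r * ‖z - x‖)
        ((-(2/r)) • (‖y - x‖⁻¹ • (innerSL ℝ (y - x)))) y := by
      have := (hnorm.const_mul (2/r)).const_sub 2
      refine this.congr_fderiv (Eq.symm ?_)
      ext v; simp
    convert h' using 2 with z
    ring
  have hGd : HasFDerivAt G ((2 - 2*(‖y - x‖/r)) • (ContinuousLinearMap.id ℝ E3)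
      + ((-(2/r)) • (‖y - x‖⁻¹ • (innerSL ℝ (y - x)))).smulRight (y - x)) y := hc.smul hid
  have hfd : fderiv ℝ (Xc x r) y = _ := hEq.fderiv_eq.trans hGd.fderiv
  rw [hfd]
  simp only [ContinuousLinearMap.add_apply, ContinuousLinearMap.smul_apply,
    ContinuousLinearMap.coe_id', id_eq, ContinuousLinearMap.smulRight_apply, innerSL_apply_apply]
  rw [inner_add_left, real_inner_smul_left, inner_e3, real_inner_smul_left]
  simp only [smul_eq_mul, inner_e3_right]
  ring

/-- The domain-variation integrand for the vector field `Xc x r`. -/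
def dvI {m : ℕ} (u : E3 → EuclideanSpace ℝ (Fin m)) (x : E3) (r : ℝ) (y : E3) : ℝ :=
  2 * ∑ i : Fin 3, ∑ j : Fin 3,
      (inner ℝ (fderiv ℝ u y (e3 i)) (fderiv ℝ u y (e3 j)) : ℝ)
        * (inner ℝ (fderiv ℝ (Xc x r) y (e3 i)) (e3 j) : ℝ)
    - gradSq u y * ∑ j : Fin 3, (inner ℝ (fderiv ℝ (Xc x r) y (e3 j)) (e3 j) : ℝ)

lemma dvI_mid {m : ℕ} (u : E3 → EuclideanSpace ℝ (Fin m)) (x : E3) {r : ℝ} (hr : 0 < r)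
    {y : E3} (h1 : r/2 < ‖y - x‖) (h2 : ‖y - x‖ < r) :
    dvI u x r y = -(gradSq u y * phi (‖x - y‖ / r))
      - 2/r * (‖fderiv ℝ u y (nu x y)‖ ^ 2 * ‖y - x‖ * psi (‖x - y‖ / r))
      + 1/r * (gradSq u y * ‖y - x‖ * psi (‖x - y‖ / r)) := by
  have ha : 0 < ‖y - x‖ := lt_trans (by positivity) h1
  have ha' : ‖y - x‖ ≠ 0 := ne_of_gt ha
  have ht1 : 1/2 < ‖x - y‖ / r := by rw [norm_sub_rev, lt_div_iff₀ hr]; linarith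
  have ht2 : ‖x - y‖ / r < 1 := by rw [norm_sub_rev, div_lt_one hr]; exact h2
  rw [phi_of_mem _ ht1 ht2, psi_of_mem _ ht1 ht2, norm_sub_rev x y]
  -- expand the derivative of u in coordinates
  have hnu : ‖fderiv ℝ u y (nu x y)‖ ^ 2
      = (‖y - x‖⁻¹)^2 * ∑ i : Fin 3, ∑ j : Fin 3, (y - x) i * (y - x) j
          * (inner ℝ (fderiv ℝ u y (e3 i)) (fderiv ℝ u y (e3 j)) : ℝ) := by
    rw [show nu x y = ‖y - x‖⁻¹ • (y - x) from rfl, _root_.map_smul, norm_smul, mul_pow,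
      Real.norm_eq_abs, abs_of_nonneg (by positivity), clm_apply_expand, norm_sq_sum_smul]
  have hw : ((y - x) 0)^2 + ((y - x) 1)^2 + ((y - x) 2)^2 = ‖y - x‖ ^ 2 := by
    rw [norm_sq_eq_sum_coord, Fin.sum_univ_three]
  have hgrad : gradSq u y = ∑ i : Fin 3, (inner ℝ (fderiv ℝ u y (e3 i)) (fderiv ℝ u y (e3 i)) : ℝ) := by
    unfold gradSq
    exact Finset.sum_congr rfl fun i _ => (real_inner_self_eq_norm_sq _).symm
  rw [dvI, hnu, hgrad]
  have hia : ‖y - x‖ * ‖y - x‖⁻¹ = 1 := mul_inv_cancel₀ ha'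
  simp only [fderiv_Xc_mid x hr h1 h2, Fin.sum_univ_three, Fin.reduceEq, reduceIte,
    mul_one, mul_zero, if_true, if_false]
  set G : Fin 3 → Fin 3 → ℝ := fun i j => (inner ℝ (fderiv ℝ u y (e3 i)) (fderiv ℝ u y (e3 j)) : ℝ) with hGdef
  set w : Fin 3 → ℝ := fun i => (y - x) i with hwdef
  linear_combination (4*(r⁻¹)*(‖y - x‖⁻¹)*(w 0*w 0*G 0 0 + w 0*w 1*G 0 1 + w 0*w 2*G 0 2
      + w 1*w 0*G 1 0 + w 1*w 1*G 1 1 + w 1*w 2*G 1 2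
      + w 2*w 0*G 2 0 + w 2*w 1*G 2 1 + w 2*w 2*G 2 2)
      + 2*(r⁻¹)*‖y - x‖*(G 0 0 + G 1 1 + G 2 2)) * hia
    + (2*(r⁻¹)*(‖y - x‖⁻¹)*(G 0 0 + G 1 1 + G 2 2)) * hw

lemma dvI_eq_ae {m : ℕ} (u : E3 → EuclideanSpace ℝ (Fin m)) (x : E3) {r : ℝ} (hr : 0 < r)
    {y : E3} (hy1 : ‖y - x‖ ≠ r/2) (hy2 : ‖y - x‖ ≠ r) :
    dvI u x r y = -(gradSq u y * phi (‖x - y‖ / r))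
      - 2/r * (‖fderiv ℝ u y (nu x y)‖ ^ 2 * ‖y - x‖ * psi (‖x - y‖ / r))
      + 1/r * (gradSq u y * ‖y - x‖ * psi (‖x - y‖ / r)) := by
  rcases lt_or_gt_of_ne hy1 with h1 | h1
  · -- inner region : Xc = z - x near y
    have hU : IsOpen {z : E3 | ‖z - x‖ < r/2} := by
      have : Continuous fun z : E3 => ‖z - x‖ := (continuous_id.sub continuous_const).norm
      exact (isOpen_Iio (a := r/2)).preimage this
    have hEq : Xc x r =ᶠ[nhds y] (fun z => z - x) := by
      filter_upwards [hU.mem_nhds h1] with z hz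
      show phi (‖x - z‖ / r) • (z - x) = z - x
      rw [phi_of_le _ (by rw [norm_sub_rev, div_le_div_iff₀ hr (by norm_num : (0:ℝ) < 2)]; linarith), one_smul]
    have hfd : fderiv ℝ (Xc x r) y = ContinuousLinearMap.id ℝ E3 :=
      hEq.fderiv_eq.trans ((hasFDerivAt_id y).sub_const x).fderiv
    have ht : ‖x - y‖ / r ≤ 1/2 := by
      rw [norm_sub_rev, div_le_div_iff₀ hr (by norm_num : (0:ℝ) < 2)]; linarith
    rw [dvI, hfd, phi_of_le _ ht, psi_of_le _ ht]
    simp only [ContinuousLinearMap.coe_id', id_eq, inner_e3, gradSq]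
    simp only [mul_ite, mul_one, mul_zero, Finset.sum_ite_eq, Finset.mem_univ, if_true,
      real_inner_self_eq_norm_sq, Finset.sum_const, Finset.card_univ,
      Fintype.card_fin, nsmul_eq_mul]
    push_cast
    ring
  · rcases lt_or_gt_of_ne hy2 with h2 | h2
    · exact dvI_mid u x hr h1 h2
    · have hU : IsOpen {z : E3 | r < ‖z - x‖} := by
        have : Continuous fun z : E3 => ‖z - x‖ := (continuous_id.sub continuous_const).norm
        exact (isOpen_Ioi (a := r)).preimage this
      have hEq : Xc x r =ᶠ[nhds y] (fun _ => (0:E3)) := by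
        filter_upwards [hU.mem_nhds h2] with z hz
        show phi (‖x - z‖ / r) • (z - x) = 0
        rw [phi_of_ge _ (by rw [norm_sub_rev, le_div_iff₀ hr]; linarith), zero_smul]
      have hfd : fderiv ℝ (Xc x r) y = 0 :=
        hEq.fderiv_eq.trans (fderiv_const_apply 0)
      have ht : 1 ≤ ‖x - y‖ / r := by rw [norm_sub_rev, le_div_iff₀ hr]; linarith
      rw [dvI, hfd, phi_of_ge _ ht, psi_of_ge _ ht]
      simp

lemma phi_abs_le (a b r : ℝ) (hr : 0 < r) :
    |phi (a / r) - phi (b / r)| ≤ 2/r * |a - b| := by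
  refine (abs_phi_sub_phi _ _).trans ?_
  rw [div_sub_div_same, abs_div, abs_of_pos hr]
  rw [div_eq_mul_inv, div_eq_mul_inv]
  ring_nf
  exact le_refl _

lemma Xc_eq_zero (x : E3) {r : ℝ} (hr : 0 < r) {z : E3} (hz : r ≤ ‖z - x‖) :
    Xc x r z = 0 := by
  show phi (‖x - z‖ / r) • (z - x) = 0
  rw [phi_of_ge _ (by rw [norm_sub_rev, le_div_iff₀ hr]; linarith), zero_smul]

lemma norm_Xc_sub_le (x : E3) {r : ℝ} (hr : 0 < r) {y : E3} (z : E3) (hy : ‖y - x‖ ≤ r) :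
    ‖Xc x r y - Xc x r z‖ ≤ 3 * ‖y - z‖ := by
  have e : Xc x r y - Xc x r z
      = (phi (‖x - y‖ / r) - phi (‖x - z‖ / r)) • (y - x) + phi (‖x - z‖ / r) • (y - z) := by
    show phi (‖x - y‖ / r) • (y - x) - phi (‖x - z‖ / r) • (z - x) = _
    module
  rw [e]
  have h1 : |phi (‖x - y‖ / r) - phi (‖x - z‖ / r)| ≤ 2/r * ‖y - z‖ := by
    refine (phi_abs_le _ _ _ hr).trans ?_
    have h3 : |‖x - y‖ - ‖x - z‖| ≤ ‖y - z‖ := by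
      calc |‖x - y‖ - ‖x - z‖| ≤ ‖(x - y) - (x - z)‖ := abs_norm_sub_norm_le _ _
        _ = ‖y - z‖ := by rw [show (x - y) - (x - z) = -(y - z) by abel, norm_neg]
    gcongr
  calc ‖(phi (‖x - y‖ / r) - phi (‖x - z‖ / r)) • (y - x) + phi (‖x - z‖ / r) • (y - z)‖
      ≤ ‖(phi (‖x - y‖ / r) - phi (‖x - z‖ / r)) • (y - x)‖ + ‖phi (‖x - z‖ / r) • (y - z)‖ :=
        norm_add_le _ _
    _ ≤ |phi (‖x - y‖ / r) - phi (‖x - z‖ / r)| * ‖y - x‖ + 1 * ‖y - z‖ := by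
        rw [norm_smul, norm_smul, Real.norm_eq_abs, Real.norm_eq_abs]
        gcongr
        rw [abs_of_nonneg (phi_nonneg _)]
        exact phi_le_one _
    _ ≤ (2/r * ‖y - z‖) * r + 1 * ‖y - z‖ :=
        add_le_add (mul_le_mul h1 hy (norm_nonneg _) (by positivity)) le_rfl
    _ ≤ 3 * ‖y - z‖ := by
        have hr' : r ≠ 0 := hr.ne'
        field_simp
        linarith [norm_nonneg (y - z)]

lemma lipschitz_Xc (x : E3) {r : ℝ} (hr : 0 < r) : LipschitzWith 3 (Xc x r) := by
  apply LipschitzWith.of_dist_le_mul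
  intro y z
  rw [dist_eq_norm, dist_eq_norm]
  push_cast
  rcases le_or_gt ‖y - x‖ r with hy | hy
  · exact norm_Xc_sub_le x hr z hy
  rcases le_or_gt ‖z - x‖ r with hz | hz
  · rw [norm_sub_rev, norm_sub_rev y z]
    exact norm_Xc_sub_le x hr y hz
  · rw [Xc_eq_zero x hr hy.le, Xc_eq_zero x hr hz.le, sub_self, norm_zero]
    positivity

lemma hasCompactSupport_Xc (x : E3) {r : ℝ} (hr : 0 < r) : HasCompactSupport (Xc x r) :=
  HasCompactSupport.intro (isCompact_closedBall x r) fun z hz =>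
    Xc_eq_zero x hr (by rw [mem_closedBall, dist_eq_norm] at hz; linarith)

lemma tsupport_Xc (x : E3) {r : ℝ} (hr : 0 < r) : tsupport (Xc x r) ⊆ closedBall x r :=
  closure_minimal (Function.support_subset_iff'.2 fun z hz =>
    Xc_eq_zero x hr (by rw [mem_closedBall, dist_eq_norm] at hz; linarith)) isClosed_closedBall

lemma measurable_psi : Measurable psi := by
  unfold psi
  refine Measurable.ite ?_ measurable_const measurable_const
  exact measurableSet_Ioo (a := (1:ℝ)/2) (b := 1)

lemma continuous_fderiv_apply {m : ℕ} {u : E3 → EuclideanSpace ℝ (Fin m)}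
    (hu : ContDiff ℝ 1 u) (v : E3) : Continuous fun y => fderiv ℝ u y v :=
  isBoundedBilinearMap_apply.continuous.comp
    ((hu.continuous_fderiv one_ne_zero).prodMk continuous_const)

lemma continuous_gradSq {m : ℕ} {u : E3 → EuclideanSpace ℝ (Fin m)}
    (hu : ContDiff ℝ 1 u) : Continuous (gradSq u) := by
  unfold gradSq
  exact continuous_finset_sum _ fun i _ => ((continuous_fderiv_apply hu (e3 i)).norm).pow 2

lemma measurable_fderiv_nu {m : ℕ} {u : E3 → EuclideanSpace ℝ (Fin m)}
    (hu : ContDiff ℝ 1 u) (x : E3) : Measurable fun y => fderiv ℝ u y (nu x y) := by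
  have h1 : Measurable fun y : E3 => nu x y := by
    refine Measurable.smul (f := fun y : E3 => ‖y - x‖⁻¹) (g := fun y : E3 => y - x) ?_ ?_
    · exact ((continuous_id.sub continuous_const).norm).measurable.inv
    · exact (continuous_id.sub continuous_const).measurable
  exact isBoundedBilinearMap_apply.continuous.measurable.comp
    ((hu.continuous_fderiv one_ne_zero).measurable.prodMk h1)

lemma integrable_of_bdd_supp {f : E3 → ℝ} (hf : AEStronglyMeasurable f (volume : Measure E3))
    (c : E3) (R C : ℝ) (h0 : ∀ y, R < ‖y - c‖ → f y = 0) (hb : ∀ y, |f y| ≤ C) :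
    Integrable f (volume : Measure E3) := by
  have hfe : f = (closedBall c R).indicator f := by
    funext y
    by_cases h : y ∈ closedBall c R
    · rw [Set.indicator_of_mem h]
    · rw [Set.indicator_of_notMem h, h0 y (by
        rw [mem_closedBall, dist_eq_norm, not_le] at h; exact h)]
  rw [hfe, integrable_indicator_iff measurableSet_closedBall]
  exact Measure.integrableOn_of_bounded measure_closedBall_lt_top.ne hf
    (Filter.Eventually.of_forall fun y => by rw [Real.norm_eq_abs]; exact hb y)

lemma psi_vanish {a r : ℝ} (hr : 0 < r) (h : r < a) : psi (a / r) = 0 :=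
  psi_of_ge _ (by rw [le_div_iff₀ hr]; linarith)

lemma integrable_g1 {m : ℕ} {u : E3 → EuclideanSpace ℝ (Fin m)} (hu : ContDiff ℝ 1 u)
    (x : E3) {s : ℝ} (hs : 0 < s) :
    Integrable (fun y => gradSq u y * phi (‖x - y‖ / s)) (volume : Measure E3) := by
  apply Continuous.integrable_of_hasCompactSupport
  · exact (continuous_gradSq hu).mul
      (continuous_phi.comp ((continuous_const.sub continuous_id).norm.div_const s))
  · apply HasCompactSupport.intro (isCompact_closedBall x s)
    intro y hy
    rw [mem_closedBall, dist_eq_norm, not_le] at hy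
    rw [phi_of_ge _ (by rw [norm_sub_rev, le_div_iff₀ hs]; linarith), mul_zero]

lemma integrable_g2 {m : ℕ} {u : E3 → EuclideanSpace ℝ (Fin m)} (hu : ContDiff ℝ 1 u)
    (x : E3) {r : ℝ} (hr : 0 < r) :
    Integrable (fun y => ‖fderiv ℝ u y (nu x y)‖ ^ 2 * ‖y - x‖ * psi (‖x - y‖ / r))
      (volume : Measure E3) := by
  obtain ⟨C, hC⟩ := (isCompact_closedBall x r).exists_bound_of_continuousOn
    (hu.continuous_fderiv one_ne_zero).continuousOn
  have hC0 : 0 ≤ C := le_trans (norm_nonneg _) (hC x (mem_closedBall_self hr.le))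
  apply integrable_of_bdd_supp _ x r (C^2 * r * 2)
  · intro y hy
    rw [norm_sub_rev x y, psi_vanish hr hy, mul_zero]
  · intro y
    rcases le_or_gt ‖y - x‖ r with hy | hy
    · have h1 : ‖fderiv ℝ u y (nu x y)‖ ≤ C := by
        calc ‖fderiv ℝ u y (nu x y)‖ ≤ ‖fderiv ℝ u y‖ * ‖nu x y‖ :=
              ContinuousLinearMap.le_opNorm _ _
          _ ≤ C * 1 := by
              apply mul_le_mul (hC y (by rwa [mem_closedBall, dist_eq_norm])) _
                (norm_nonneg _) hC0
              show ‖‖y - x‖⁻¹ • (y - x)‖ ≤ 1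
              rw [norm_smul, Real.norm_eq_abs, abs_of_nonneg (by positivity)]
              rcases eq_or_ne (y - x) 0 with h | h
              · simp [h]
              · rw [inv_mul_cancel₀ (norm_ne_zero_iff.2 h)]
          _ = C := mul_one C
      have h2 : psi (‖x - y‖ / r) ≤ 2 := by
        unfold psi; split <;> norm_num
      have h3 : 0 ≤ psi (‖x - y‖ / r) := by
        unfold psi; split <;> norm_num
      rw [abs_of_nonneg (mul_nonneg (mul_nonneg (by positivity) (norm_nonneg _)) h3)]
      refine mul_le_mul ?_ h2 h3 (by positivity)
      exact mul_le_mul (pow_le_pow_left₀ (norm_nonneg _) h1 2) hy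
        (norm_nonneg _) (by positivity)
    · rw [norm_sub_rev x y, psi_vanish hr hy, mul_zero, abs_zero]
      positivity
  · apply Measurable.aestronglyMeasurable
    exact (((measurable_fderiv_nu hu x).norm.pow_const 2).mul
      ((continuous_id.sub continuous_const).norm.measurable)).mul
      (measurable_psi.comp ((continuous_const.sub continuous_id).norm.div_const r).measurable)

lemma integrable_g3 {m : ℕ} {u : E3 → EuclideanSpace ℝ (Fin m)} (hu : ContDiff ℝ 1 u)
    (x : E3) {r : ℝ} (hr : 0 < r) :
    Integrable (fun y => gradSq u y * ‖y - x‖ * psi (‖x - y‖ / r))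
      (volume : Measure E3) := by
  obtain ⟨C, hC⟩ := (isCompact_closedBall x r).exists_bound_of_continuousOn
    (continuous_gradSq hu).continuousOn
  have hC0 : 0 ≤ C := le_trans (norm_nonneg _) (hC x (mem_closedBall_self hr.le))
  have hg0 : ∀ y, 0 ≤ gradSq u y := fun y => Finset.sum_nonneg fun i _ => by positivity
  apply integrable_of_bdd_supp _ x r (C * r * 2)
  · intro y hy
    rw [norm_sub_rev x y, psi_vanish hr hy, mul_zero]
  · intro y
    rcases le_or_gt ‖y - x‖ r with hy | hy
    · have h1 : gradSq u y ≤ C := by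
        have := hC y (by rwa [mem_closedBall, dist_eq_norm])
        rwa [Real.norm_eq_abs, abs_of_nonneg (hg0 y)] at this
      have h2 : psi (‖x - y‖ / r) ≤ 2 := by unfold psi; split <;> norm_num
      have h3 : 0 ≤ psi (‖x - y‖ / r) := by unfold psi; split <;> norm_num
      rw [abs_of_nonneg (mul_nonneg (mul_nonneg (hg0 y) (norm_nonneg _)) h3)]
      refine mul_le_mul ?_ h2 h3 (by positivity)
      exact mul_le_mul h1 hy (norm_nonneg _) hC0
    · rw [norm_sub_rev x y, psi_vanish hr hy, mul_zero, abs_zero]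
      positivity
  · apply Measurable.aestronglyMeasurable
    exact (((continuous_gradSq hu).measurable).mul
      ((continuous_id.sub continuous_const).norm.measurable)).mul
      (measurable_psi.comp ((continuous_const.sub continuous_id).norm.div_const r).measurable)

lemma ae_off_spheres (x : E3) (r : ℝ) :
    ∀ᵐ y : E3, ‖y - x‖ ≠ r/2 ∧ ‖y - x‖ ≠ r := by
  rw [MeasureTheory.ae_iff]
  refine measure_mono_null ?_ (measure_union_null (Measure.addHaar_sphere volume x (r/2))
    (Measure.addHaar_sphere volume x r))
  intro y hy
  simp only [Set.mem_setOf_eq, not_and_or, not_not] at hy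
  rcases hy with h | h
  · exact Or.inl (by rw [mem_sphere, dist_eq_norm]; exact h)
  · exact Or.inr (by rw [mem_sphere, dist_eq_norm]; exact h)

lemma dv_identity {m : ℕ} {u : E3 → EuclideanSpace ℝ (Fin m)} (hu : ContDiff ℝ 1 u)
    (hdv : DomainVariation u (ball (0 : E3) 64)) (x : E3) {r : ℝ} (hr : 0 < r)
    (hball : closedBall x r ⊆ ball (0 : E3) 64) :
    ∫ y : E3, gradSq u y * ‖y - x‖ * psi (‖x - y‖ / r)
      = r * Dphi u x r + 2 * Ephi u x r := by
  have h0 : ∫ y : E3, dvI u x r y = 0 :=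
    hdv (Xc x r) ⟨3, lipschitz_Xc x hr⟩ (hasCompactSupport_Xc x hr)
      ((tsupport_Xc x hr).trans hball)
  have hae : (fun y => dvI u x r y) =ᵐ[(volume : Measure E3)]
      fun y => -(gradSq u y * phi (‖x - y‖ / r))
        - 2/r * (‖fderiv ℝ u y (nu x y)‖ ^ 2 * ‖y - x‖ * psi (‖x - y‖ / r))
        + 1/r * (gradSq u y * ‖y - x‖ * psi (‖x - y‖ / r)) := by
    filter_upwards [ae_off_spheres x r] with y hy
    exact dvI_eq_ae u x hr hy.1 hy.2
  rw [integral_congr_ae hae] at h0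
  have hI1 := integrable_g1 hu x hr
  have hI2 := integrable_g2 hu x hr
  have hI3 := integrable_g3 hu x hr
  have hImid : Integrable (fun y : E3 => -(gradSq u y * phi (‖x - y‖ / r))
      - 2/r * (‖fderiv ℝ u y (nu x y)‖ ^ 2 * ‖y - x‖ * psi (‖x - y‖ / r)))
      (volume : Measure E3) := hI1.neg.sub (hI2.const_mul (2/r))
  have hIneg : Integrable (fun y : E3 => -(gradSq u y * phi (‖x - y‖ / r)))
      (volume : Measure E3) := hI1.neg
  rw [integral_add hImid (hI3.const_mul (1/r)),
    integral_sub hIneg (hI2.const_mul (2/r)), integral_neg,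
    integral_const_mul, integral_const_mul] at h0
  have hD : Dphi u x r = ∫ y : E3, gradSq u y * phi (‖x - y‖ / r) := rfl
  have hE : Ephi u x r
      = ∫ y : E3, ‖fderiv ℝ u y (nu x y)‖ ^ 2 * ‖y - x‖ * psi (‖x - y‖ / r) := rfl
  rw [← hD, ← hE] at h0
  have hr' : r ≠ 0 := hr.ne'
  field_simp at h0
  linarith

lemma psi_le_two (t : ℝ) : psi t ≤ 2 := by unfold psi; split <;> norm_num
lemma psi_nonneg (t : ℝ) : 0 ≤ psi t := by unfold psi; split <;> norm_num
lemma gradSq_nonneg {m : ℕ} (u : E3 → EuclideanSpace ℝ (Fin m)) (y : E3) : 0 ≤ gradSq u y :=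
  Finset.sum_nonneg fun i _ => by positivity

theorem main_deriv {m : ℕ} (u : E3 → EuclideanSpace ℝ (Fin m))
    (hu : ContDiff ℝ 1 u) (hdv : DomainVariation u (ball (0 : E3) 64)) :
    ∀ (x : E3) (r : ℝ), 0 < r → closedBall x r ⊆ ball (0 : E3) 64 →
      HasDerivAt (fun s : ℝ => Dphi u x s)
        (Dphi u x r / r + 2 * Ephi u x r / r ^ 2) r := by
  intro x r hr hball
  have hr' : r ≠ 0 := hr.ne'
  obtain ⟨C, hC⟩ := (isCompact_closedBall x (2*r)).exists_bound_of_continuousOn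
    (continuous_gradSq hu).continuousOn
  have hC0 : 0 ≤ C := le_trans (norm_nonneg _) (hC x (mem_closedBall_self (by positivity)))
  have hgC : ∀ y ∈ closedBall x (2*r), gradSq u y ≤ C := fun y hy => by
    have := hC y hy; rwa [Real.norm_eq_abs, abs_of_nonneg (gradSq_nonneg u y)] at this
  have key := hasDerivAt_integral_of_dominated_loc_of_lip
    (F := fun (s : ℝ) (y : E3) => gradSq u y * phi (‖x - y‖ / s))
    (F' := fun y : E3 => gradSq u y * ‖y - x‖ * psi (‖x - y‖ / r) * (r^2)⁻¹)
    (x₀ := r) (s := ball r (r/2))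
    (bound := (closedBall x (2*r)).indicator fun _ => C * (16/r))
    (μ := (volume : Measure E3))
    (ball_mem_nhds r (half_pos hr))
    (Filter.Eventually.of_forall fun s => ((continuous_gradSq hu).mul
      (continuous_phi.comp ((continuous_const.sub continuous_id).norm.div_const s))).aestronglyMeasurable)
    (integrable_g1 hu x hr)
    ((((continuous_gradSq hu).measurable.mul
        ((continuous_id.sub continuous_const).norm.measurable)).mul
        (measurable_psi.comp ((continuous_const.sub continuous_id).norm.div_const r).measurable)).mul_const
        ((r^2)⁻¹)).aestronglyMeasurable
    ?_ ?_ ?_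
  · -- conclude
    have h2 := key.2
    have hval : (∫ y : E3, gradSq u y * ‖y - x‖ * psi (‖x - y‖ / r) * (r^2)⁻¹)
        = Dphi u x r / r + 2 * Ephi u x r / r ^ 2 := by
      rw [integral_mul_const, dv_identity hu hdv x hr hball]
      field_simp
    rw [hval] at h2
    exact h2
  · -- Lipschitz bound
    refine Filter.Eventually.of_forall fun y => ?_
    by_cases hmem : y ∈ closedBall x (2*r)
    · rw [Set.indicator_of_mem hmem]
      apply LipschitzOnWith.of_dist_le_mul
      intro s hs s' hs'
      rw [Real.dist_eq, Real.dist_eq, Real.coe_nnabs]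
      rw [mem_ball, Real.dist_eq, abs_lt] at hs hs'
      have hs1 : r/2 < s := by linarith [hs.1]
      have hs2 : s < 3*r/2 := by linarith [hs.2]
      have hs1' : r/2 < s' := by linarith [hs'.1]
      have hs2' : s' < 3*r/2 := by linarith [hs'.2]
      have hspos : 0 < s := lt_trans (by positivity) hs1
      have hspos' : 0 < s' := lt_trans (by positivity) hs1'
      have ha : ‖x - y‖ ≤ 2*r := by
        rw [mem_closedBall, dist_eq_norm, ← norm_sub_rev] at hmem; exact hmem
      have hstep : |‖x - y‖ / s - ‖x - y‖ / s'| = ‖x - y‖ * |s - s'| / (s * s') := by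
        rw [show ‖x - y‖ / s - ‖x - y‖ / s' = ‖x - y‖ * (s' - s) / (s * s') by
          field_simp, abs_div, abs_mul, abs_of_nonneg (norm_nonneg _),
          abs_of_pos (mul_pos hspos hspos'), abs_sub_comm s' s]
      calc |gradSq u y * phi (‖x - y‖ / s) - gradSq u y * phi (‖x - y‖ / s')|
          = gradSq u y * |phi (‖x - y‖ / s) - phi (‖x - y‖ / s')| := by
            rw [← mul_sub, abs_mul, abs_of_nonneg (gradSq_nonneg u y)]
        _ ≤ gradSq u y * (2 * |‖x - y‖ / s - ‖x - y‖ / s'|) :=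
            mul_le_mul_of_nonneg_left (abs_phi_sub_phi _ _) (gradSq_nonneg u y)
        _ = gradSq u y * 2 * (‖x - y‖ * |s - s'| / (s * s')) := by rw [hstep]; ring
        _ ≤ C * 2 * ((2*r) * |s - s'| / ((r/2) * (r/2))) := by
            refine mul_le_mul (mul_le_mul (hgC y hmem) le_rfl (by norm_num)
              hC0) ?_ (by positivity) (by positivity)
            apply div_le_div₀ (by positivity)
              (mul_le_mul ha le_rfl (abs_nonneg _) (by positivity)) (by positivity)
            exact mul_le_mul hs1.le hs1'.le (by positivity) hspos.le
        _ = |C * (16/r)| * |s - s'| := by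
            rw [abs_of_nonneg (mul_nonneg hC0 (div_nonneg (by norm_num) hr.le))]
            field_simp
            ring
    · rw [Set.indicator_of_notMem hmem]
      apply LipschitzOnWith.of_dist_le_mul
      intro s hs s' hs'
      rw [mem_ball, Real.dist_eq, abs_lt] at hs hs'
      have h2r : 2*r < ‖x - y‖ := by
        rw [mem_closedBall, dist_eq_norm, ← norm_sub_rev, not_le] at hmem; exact hmem
      have hz : ∀ t : ℝ, t ∈ Set.Ioo (r - r/2) (r + r/2) →
          gradSq u y * phi (‖x - y‖ / t) = 0 := by
        intro t ht
        rw [phi_of_ge _ (by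
          rw [le_div_iff₀ (by linarith [ht.1] : (0:ℝ) < t)]
          have := ht.2; linarith), mul_zero]
      show dist (gradSq u y * phi (‖x - y‖ / s)) (gradSq u y * phi (‖x - y‖ / s')) ≤ _
      rw [hz s ⟨by linarith [hs.1], by linarith [hs.2]⟩,
        hz s' ⟨by linarith [hs'.1], by linarith [hs'.2]⟩]
      simp
  · -- bound integrable
    rw [integrable_indicator_iff measurableSet_closedBall]
    exact integrableOn_const measure_closedBall_lt_top.ne
  · -- a.e. differentiability
    filter_upwards [ae_off_spheres x r] with y hy
    rw [norm_sub_rev y x] at hy ⊢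
    set a := ‖x - y‖ with hadef
    have ha0 : 0 ≤ a := norm_nonneg _
    rcases lt_or_gt_of_ne hy.1 with h1 | h1
    · -- a < r/2
      have hpsi : psi (a / r) = 0 := psi_of_le _ (by rw [div_le_div_iff₀ hr (by norm_num : (0:ℝ)<2)]; linarith)
      have hval : gradSq u y * a * psi (a / r) * (r^2)⁻¹ = 0 := by rw [hpsi]; ring
      rw [hval]
      apply (hasDerivAt_const r (gradSq u y * 1)).congr_of_eventuallyEq
      filter_upwards [Ioi_mem_nhds (show max (2*a) 0 < r by
        rw [max_lt_iff]; exact ⟨by linarith, hr⟩)] with s hs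
      rw [Set.mem_Ioi, max_lt_iff] at hs
      rw [phi_of_le _ (by rw [div_le_div_iff₀ hs.2 (by norm_num : (0:ℝ)<2)]; linarith [hs.1])]
    · rcases lt_or_gt_of_ne hy.2 with h2 | h2
      · -- r/2 < a < r
        have hd : HasDerivAt (fun s : ℝ => gradSq u y * (2 - 2*a * s⁻¹))
            (gradSq u y * (2*a * (r^2)⁻¹)) r := by
          have hi := hasDerivAt_inv hr'
          have := ((hi.const_mul (2*a)).const_sub 2).const_mul (gradSq u y)
          refine this.congr_deriv (Eq.symm ?_)
          ring
        have hev : (fun s : ℝ => gradSq u y * phi (a / s))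
            =ᶠ[nhds r] (fun s : ℝ => gradSq u y * (2 - 2*a * s⁻¹)) := by
          filter_upwards [Ioo_mem_nhds h2 (by linarith : r < 2*a)] with s hs
          rw [phi_of_mem _ (by rw [lt_div_iff₀ (by linarith [hs.1, ha0] : (0:ℝ) < s)]; linarith [hs.2])
            (by rw [div_lt_one (by linarith [hs.1, ha0] : (0:ℝ) < s)]; exact hs.1)]
          rw [div_eq_mul_inv]
          ring
        have hfinal := hd.congr_of_eventuallyEq hev
        refine hfinal.congr_deriv (Eq.symm ?_)
        rw [psi_of_mem _ (by rw [lt_div_iff₀ hr]; linarith) (by rw [div_lt_one hr]; exact h2)]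
        ring
      · -- a > r
        have hpsi : psi (a / r) = 0 := psi_of_ge _ (by rw [le_div_iff₀ hr]; linarith)
        have hval : gradSq u y * a * psi (a / r) * (r^2)⁻¹ = 0 := by rw [hpsi]; ring
        rw [hval]
        apply (hasDerivAt_const r (gradSq u y * 0)).congr_of_eventuallyEq
        filter_upwards [Ioo_mem_nhds (by linarith : (0:ℝ) < r) h2] with s hs
        rw [phi_of_ge _ (by rw [le_div_iff₀ hs.1]; linarith [hs.2])]

/-- radial derivative of the smoothed Dirichlet energy. -/
theorem stmt_1 {m : ℕ} (hm : 1 ≤ m) (u : E3 → EuclideanSpace ℝ (Fin m))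
    (hu : ContDiff ℝ 1 u) (hdv : DomainVariation u (ball (0 : E3) 64)) :
    ∀ (x : E3) (r : ℝ), 0 < r → closedBall x r ⊆ ball (0 : E3) 64 →
      HasDerivAt (fun s : ℝ => Dphi u x s)
        (Dphi u x r / r + 2 * Ephi u x r / r ^ 2) r :=
  main_deriv u hu hdv
end
end

section
/- Let μ be a finite nonnegative Borel measure on ℝ³, let x₀ ∈ ℝ³ and r₀ > 0 satisfy μ(B_{r₀}(x₀)) > 0, and let x̄ be the barycenter of μ in B_{r₀}(x₀). Suppose v₁, v₂, v₃ is an orthonormal basis of ℝ³ and λ₁ ≥ λ₂ ≥ λ₃ are real numbers such that ∫_{B_{r₀}(x₀)} ((x − x̄)·v_i)((x − x̄)·v_j) dμ(x) = λ_i δ_{ij} for all i, j. Then D_μ(x₀, r₀) = (λ₂ + λ₃)/r₀³, and the infimum defining D_μ(x₀, r₀) is attained by the line L = x̄ + span{v₁}. -/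
open MeasureTheory Metric

noncomputable section

lemma lineThrough_smul (a v : E3) (hv : v ≠ 0) :
    lineThrough a v = lineThrough a (‖v‖⁻¹ • v) := by
  have hn : ‖v‖ ≠ 0 := norm_ne_zero_iff.2 hv
  ext y; constructor
  · rintro ⟨t, rfl⟩; exact ⟨t * ‖v‖, by rw [smul_smul]; rw [mul_assoc, mul_inv_cancel₀ hn, mul_one]⟩
  · rintro ⟨t, rfl⟩; exact ⟨t * ‖v‖⁻¹, by rw [smul_smul]⟩

lemma infDist_lineThrough (y a w : E3) (hw : ‖w‖ = 1) :
    Metric.infDist y (lineThrough a w) = ‖y - a - (inner ℝ (y - a) w : ℝ) • w‖ := by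
  have hne : (lineThrough a w).Nonempty := ⟨a, 0, by simp⟩
  have key : ∀ t : ℝ, ‖y - (a + t • w)‖ ^ 2
      = ‖y - a - (inner ℝ (y - a) w : ℝ) • w‖ ^ 2 + ((inner ℝ (y - a) w : ℝ) - t) ^ 2 := by
    intro t
    have h1 : y - (a + t • w) = (y - a - (inner ℝ (y - a) w : ℝ) • w)
        + (((inner ℝ (y - a) w : ℝ) - t) • w) := by
      rw [sub_smul]; abel
    have horth : (inner ℝ (y - a - (inner ℝ (y - a) w : ℝ) • w) (((inner ℝ (y - a) w : ℝ) - t) • w) : ℝ) = 0 := by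
      simp only [inner_smul_right, inner_sub_left, inner_smul_left, real_inner_self_eq_norm_sq, hw, starRingEnd_apply, star_trivial]
      ring
    rw [h1, norm_add_sq_real, horth, norm_smul]
    simp only [hw, Real.norm_eq_abs, mul_one, mul_zero, add_zero]
    rw [sq_abs]
  apply le_antisymm
  · have hmem : a + (inner ℝ (y - a) w : ℝ) • w ∈ lineThrough a w := ⟨_, rfl⟩
    refine (Metric.infDist_le_dist_of_mem hmem).trans_eq ?_
    rw [dist_eq_norm]
    congr 1; abel
  · rw [Metric.infDist_eq_iInf]
    have : Nonempty (lineThrough a w) := hne.to_subtype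
    refine le_ciInf fun ⟨z, t, hz⟩ => ?_
    rw [dist_eq_norm]
    have h2 : ‖y - a - (inner ℝ (y - a) w : ℝ) • w‖ ^ 2 ≤ ‖y - z‖ ^ 2 := by
      rw [hz, key t]; nlinarith [sq_nonneg ((inner ℝ (y - a) w : ℝ) - t)]
    nlinarith [norm_nonneg (y - z), norm_nonneg (y - a - (inner ℝ (y - a) w : ℝ) • w)]

lemma pythag (z w : E3) (hw : ‖w‖ = 1) :
    ‖z - (inner ℝ z w : ℝ) • w‖ ^ 2 = ‖z‖ ^ 2 - (inner ℝ z w : ℝ) ^ 2 := by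
  rw [norm_sub_sq_real, inner_smul_right, norm_smul]
  simp [real_inner_self_eq_norm_sq, hw]; ring
lemma contIntegrableOn {F : Type*} [NormedAddCommGroup F] (μ : Measure E3) [IsFiniteMeasure μ]
    (x₀ : E3) (r₀ : ℝ) {f : E3 → F} (hf : Continuous f) : IntegrableOn f (ball x₀ r₀) μ :=
  ((hf.continuousOn).integrableOn_compact (isCompact_closedBall x₀ r₀)).mono_set
    ball_subset_closedBall

lemma key_integral (μ : Measure E3) [IsFiniteMeasure μ] (x₀ : E3) (r₀ : ℝ)
    (hμ : 0 < μ (ball x₀ r₀)) (xbar : E3)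
    (hxbar : xbar = (μ (ball x₀ r₀)).toReal⁻¹ • ∫ x in ball x₀ r₀, x ∂μ)
    (v : Fin 3 → E3) (hv : Orthonormal ℝ v) (lam : Fin 3 → ℝ)
    (hdiag : ∀ i j : Fin 3,
      (∫ x in ball x₀ r₀,
          (inner ℝ (x - xbar) (v i) : ℝ) * (inner ℝ (x - xbar) (v j) : ℝ) ∂μ)
        = if i = j then lam i else 0)
    (a w : E3) (hw : ‖w‖ = 1) :
    (∫ y in ball x₀ r₀, Metric.infDist y (lineThrough a w) ^ 2 ∂μ)
      = ((lam 0 + lam 1 + lam 2) - ∑ i, (inner ℝ w (v i) : ℝ) ^ 2 * lam i)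
        + (μ (ball x₀ r₀)).toReal
            * (‖xbar - a‖ ^ 2 - (inner ℝ (xbar - a) w : ℝ) ^ 2) := by
  set S := ball x₀ r₀ with hS
  set m := (μ S).toReal with hm
  have hm0 : m ≠ 0 := (ENNReal.toReal_pos hμ.ne' (measure_ne_top μ _)).ne'
  -- orthonormal basis
  have card_eq : Fintype.card (Fin 3) = Module.finrank ℝ E3 := by simp
  let b' := basisOfOrthonormalOfCardEqFinrank hv card_eq
  have hcoe : ⇑b' = v := coe_basisOfOrthonormalOfCardEqFinrank hv card_eq
  have hsp : ⊤ ≤ Submodule.span ℝ (Set.range v) := by rw [← hcoe]; exact b'.span_eq.ge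
  let b : OrthonormalBasis (Fin 3) ℝ E3 := OrthonormalBasis.mk hv hsp
  have hb : ⇑b = v := by simp [b, OrthonormalBasis.coe_mk]
  -- integral of y - xbar is zero
  have hid : IntegrableOn (fun y : E3 => y) S μ := contIntegrableOn μ x₀ r₀ continuous_id
  have hzero : (∫ y in S, (y - xbar) ∂μ) = 0 := by
    rw [integral_sub hid (integrableOn_const (measure_ne_top μ _)),
      setIntegral_const, measureReal_def, ← hm, hxbar, smul_smul, mul_inv_cancel₀ hm0, one_smul, sub_self]
  have hsubint : IntegrableOn (fun y : E3 => y - xbar) S μ :=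
    contIntegrableOn μ x₀ r₀ (continuous_id.sub continuous_const)
  have hlin : ∀ u : E3, (∫ y in S, (inner ℝ (y - xbar) u : ℝ) ∂μ) = 0 := by
    intro u
    have h1 : (∫ y in S, (inner ℝ (y - xbar) u : ℝ) ∂μ)
        = ∫ y in S, (inner ℝ u (y - xbar) : ℝ) ∂μ := by
      simp_rw [real_inner_comm]
    rw [h1, integral_inner hsubint u, hzero, inner_zero_right]
  -- continuity/integrability of inner ℝ products
  have hgcont : ∀ u : E3, Continuous fun y : E3 => (inner ℝ (y - xbar) u : ℝ) := fun u =>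
    (continuous_id.sub continuous_const).inner continuous_const
  -- Parseval identities
  have hParse : ∀ z : E3, ‖z‖ ^ 2 = ∑ i, (inner ℝ z (v i) : ℝ) ^ 2 := by
    intro z
    have h := b.sum_inner_mul_inner z z
    rw [hb, real_inner_self_eq_norm_sq] at h
    rw [← h]
    refine Finset.sum_congr rfl fun i _ => ?_
    rw [pow_two, real_inner_comm (v i) z]
  have hexp : ∀ z : E3, (inner ℝ z w : ℝ) = ∑ i, (inner ℝ w (v i) : ℝ) * (inner ℝ z (v i) : ℝ) := by
    intro z
    have h := b.sum_inner_mul_inner z w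
    rw [hb] at h
    rw [← h]
    refine Finset.sum_congr rfl fun i _ => ?_
    rw [real_inner_comm (v i) w]; ring
  -- hT
  have hT : (∫ y in S, ‖y - xbar‖ ^ 2 ∂μ) = lam 0 + lam 1 + lam 2 := by
    have h1 : (∫ y in S, ‖y - xbar‖ ^ 2 ∂μ)
        = ∫ y in S, ∑ i, (inner ℝ (y - xbar) (v i) : ℝ) ^ 2 ∂μ :=
      integral_congr_ae (Filter.Eventually.of_forall fun y => hParse _)
    rw [h1, integral_finset_sum _ (fun i _ => (contIntegrableOn μ x₀ r₀ ((hgcont (v i)).pow 2) :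
      IntegrableOn (fun y : E3 => (inner ℝ (y - xbar) (v i) : ℝ) ^ 2) S μ))]
    have h2 : ∀ i : Fin 3, (∫ y in S, (inner ℝ (y - xbar) (v i) : ℝ) ^ 2 ∂μ) = lam i := by
      intro i
      have h4 := hdiag i i
      rw [if_pos rfl] at h4
      rw [← h4]
      exact integral_congr_ae (Filter.Eventually.of_forall fun y => by dsimp only; rw [pow_two])
    rw [Fin.sum_univ_three, h2 0, h2 1, h2 2]
  -- hQ
  have hQ : (∫ y in S, (inner ℝ (y - xbar) w : ℝ) ^ 2 ∂μ)
      = ∑ i, (inner ℝ w (v i) : ℝ) ^ 2 * lam i := by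
    have h1 : ∀ y : E3, (inner ℝ (y - xbar) w : ℝ) ^ 2
        = ∑ i, ∑ j, ((inner ℝ w (v i) : ℝ) * (inner ℝ w (v j) : ℝ))
            * ((inner ℝ (y - xbar) (v i) : ℝ) * (inner ℝ (y - xbar) (v j) : ℝ)) := by
      intro y
      rw [hexp (y - xbar), pow_two, Finset.sum_mul_sum]
      exact Finset.sum_congr rfl fun i _ => Finset.sum_congr rfl fun j _ => by ring
    rw [integral_congr_ae (Filter.Eventually.of_forall h1)]
    rw [integral_finset_sum _ (fun i _ => contIntegrableOn μ x₀ r₀ (by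
      exact continuous_finset_sum _ fun j _ =>
        (continuous_const.mul (((hgcont (v i)).mul (hgcont (v j))))) ))]
    have h2 : ∀ i : Fin 3, (∫ y in S, ∑ j, ((inner ℝ w (v i) : ℝ) * (inner ℝ w (v j) : ℝ))
            * ((inner ℝ (y - xbar) (v i) : ℝ) * (inner ℝ (y - xbar) (v j) : ℝ)) ∂μ)
        = (inner ℝ w (v i) : ℝ) ^ 2 * lam i := by
      intro i
      rw [integral_finset_sum _ (fun j _ => (contIntegrableOn μ x₀ r₀
        ((continuous_const.mul (((hgcont (v i)).mul (hgcont (v j))))) ) :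
        IntegrableOn (fun y : E3 => ((inner ℝ w (v i) : ℝ) * (inner ℝ w (v j) : ℝ))
          * ((inner ℝ (y - xbar) (v i) : ℝ) * (inner ℝ (y - xbar) (v j) : ℝ))) S μ))]
      have h3 : ∀ j : Fin 3, (∫ y in S, ((inner ℝ w (v i) : ℝ) * (inner ℝ w (v j) : ℝ))
            * ((inner ℝ (y - xbar) (v i) : ℝ) * (inner ℝ (y - xbar) (v j) : ℝ)) ∂μ)
          = ((inner ℝ w (v i) : ℝ) * (inner ℝ w (v j) : ℝ)) * (if i = j then lam i else 0) := by
        intro j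
        rw [integral_const_mul, hdiag i j]
      rw [Finset.sum_congr rfl fun j _ => h3 j]
      rw [Finset.sum_eq_single i (fun j _ hj => by
        rw [if_neg (fun h => hj h.symm), mul_zero]) (fun h => absurd (Finset.mem_univ i) h)]
      rw [if_pos rfl]; ring
    exact Finset.sum_congr rfl fun i _ => h2 i
  -- pointwise identity
  set c : E3 := xbar - a with hc
  set d : E3 := c - (inner ℝ c w : ℝ) • w with hd
  have hpt : ∀ y : E3, Metric.infDist y (lineThrough a w) ^ 2
      = (‖y - xbar‖ ^ 2 - (inner ℝ (y - xbar) w : ℝ) ^ 2)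
        + (2 * (inner ℝ (y - xbar) d : ℝ) + (‖c‖ ^ 2 - (inner ℝ c w : ℝ) ^ 2)) := by
    intro y
    rw [infDist_lineThrough y a w hw, pythag _ _ hw]
    have hya : y - a = (y - xbar) + c := by rw [hc]; abel
    rw [hya, norm_add_sq_real, inner_add_left, hd]
    simp only [inner_sub_right, inner_smul_right]
    ring
  rw [integral_congr_ae (Filter.Eventually.of_forall hpt)]
  have hintA : IntegrableOn
      (fun y : E3 => ‖y - xbar‖ ^ 2 - (inner ℝ (y - xbar) w : ℝ) ^ 2) S μ :=
    contIntegrableOn μ x₀ r₀ ((by fun_prop : Continuous fun y : E3 => ‖y - xbar‖ ^ 2).sub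
      ((hgcont w).pow 2))
  have hintB : IntegrableOn
      (fun y : E3 => 2 * (inner ℝ (y - xbar) d : ℝ) + (‖c‖ ^ 2 - (inner ℝ c w : ℝ) ^ 2)) S μ :=
    contIntegrableOn μ x₀ r₀ ((continuous_const.mul (hgcont d)).add continuous_const)
  rw [integral_add hintA hintB]
  have hA : (∫ y in S, (‖y - xbar‖ ^ 2 - (inner ℝ (y - xbar) w : ℝ) ^ 2) ∂μ)
      = (lam 0 + lam 1 + lam 2) - ∑ i, (inner ℝ w (v i) : ℝ) ^ 2 * lam i := by
    have hint1 : IntegrableOn (fun y : E3 => ‖y - xbar‖ ^ 2) S μ :=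
      contIntegrableOn μ x₀ r₀ (by fun_prop)
    have hint2 : IntegrableOn (fun y : E3 => (inner ℝ (y - xbar) w : ℝ) ^ 2) S μ :=
      contIntegrableOn μ x₀ r₀ ((hgcont w).pow 2)
    rw [integral_sub hint1 hint2, hT, hQ]
  have hB : (∫ y in S, (2 * (inner ℝ (y - xbar) d : ℝ)
        + (‖c‖ ^ 2 - (inner ℝ c w : ℝ) ^ 2)) ∂μ)
      = m * (‖c‖ ^ 2 - (inner ℝ c w : ℝ) ^ 2) := by
    rw [integral_add (contIntegrableOn μ x₀ r₀ (continuous_const.mul (hgcont d)) :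
        IntegrableOn (fun y : E3 => 2 * (inner ℝ (y - xbar) d : ℝ)) S μ)
      (integrableOn_const (measure_ne_top μ _)), integral_const_mul, hlin d,
      setIntegral_const, measureReal_def, ← hm, smul_eq_mul]
    ring
  rw [hA, hB]
lemma parseval3 (v : Fin 3 → E3) (hv : Orthonormal ℝ v) (z : E3) :
    ∑ i, (inner ℝ z (v i) : ℝ) ^ 2 = ‖z‖ ^ 2 := by
  have card_eq : Fintype.card (Fin 3) = Module.finrank ℝ E3 := by simp
  let b' := basisOfOrthonormalOfCardEqFinrank hv card_eq
  have hcoe : ⇑b' = v := coe_basisOfOrthonormalOfCardEqFinrank hv card_eq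
  have hsp : ⊤ ≤ Submodule.span ℝ (Set.range v) := by rw [← hcoe]; exact b'.span_eq.ge
  let b : OrthonormalBasis (Fin 3) ℝ E3 := OrthonormalBasis.mk hv hsp
  have hb : ⇑b = v := by simp [b, OrthonormalBasis.coe_mk]
  have h := b.sum_inner_mul_inner z z
  rw [hb, real_inner_self_eq_norm_sq] at h
  rw [← h]
  refine Finset.sum_congr rfl fun i _ => ?_
  rw [pow_two, real_inner_comm (v i) z]


/-- linear algebraic characterization of the Jones β₂-number, and attainment
of the infimum by the line through the barycenter in the top eigendirection. -/
theorem stmt_11 (μ : Measure E3) [IsFiniteMeasure μ] (x₀ : E3) (r₀ : ℝ) (hr₀ : 0 < r₀)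
    (hμ : 0 < μ (ball x₀ r₀)) (xbar : E3)
    (hxbar : xbar = (μ (ball x₀ r₀)).toReal⁻¹ • ∫ x in ball x₀ r₀, x ∂μ)
    (v : Fin 3 → E3) (hv : Orthonormal ℝ v) (lam : Fin 3 → ℝ)
    (hord21 : lam 2 ≤ lam 1) (hord10 : lam 1 ≤ lam 0)
    (hdiag : ∀ i j : Fin 3,
      (∫ x in ball x₀ r₀,
          (inner ℝ (x - xbar) (v i) : ℝ) * (inner ℝ (x - xbar) (v j) : ℝ) ∂μ)
        = if i = j then lam i else 0) :
    JonesD μ x₀ r₀ = (lam 1 + lam 2) / r₀ ^ 3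
      ∧ (∫ y in ball x₀ r₀, Metric.infDist y (lineThrough xbar (v 0)) ^ 2 ∂μ) / r₀ ^ 3
          = JonesD μ x₀ r₀ := by
  
  have hr3 : (0 : ℝ) < r₀ ^ 3 := by positivity
  have hlamle : ∀ i : Fin 3, lam i ≤ lam 0 := by
    intro i; fin_cases i
    · exact le_rfl
    · exact hord10
    · exact hord21.trans hord10
  -- lower bound for any unit-direction line
  have hlow : ∀ a w : E3, ‖w‖ = 1 →
      lam 1 + lam 2 ≤ ∫ y in ball x₀ r₀, Metric.infDist y (lineThrough a w) ^ 2 ∂μ := by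
    intro a w hw
    rw [key_integral μ x₀ r₀ hμ xbar hxbar v hv lam hdiag a w hw]
    have hsum1 : ∑ i, (inner ℝ w (v i) : ℝ) ^ 2 = 1 := by
      rw [parseval3 v hv w, hw, one_pow]
    have hQle : ∑ i, (inner ℝ w (v i) : ℝ) ^ 2 * lam i ≤ lam 0 := by
      calc ∑ i, (inner ℝ w (v i) : ℝ) ^ 2 * lam i
          ≤ ∑ i, (inner ℝ w (v i) : ℝ) ^ 2 * lam 0 :=
            Finset.sum_le_sum fun i _ =>
              mul_le_mul_of_nonneg_left (hlamle i) (sq_nonneg _)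
        _ = lam 0 := by rw [← Finset.sum_mul, hsum1, one_mul]
    have hcs : (inner ℝ (xbar - a) w : ℝ) ^ 2 ≤ ‖xbar - a‖ ^ 2 := by
      have h := real_inner_mul_inner_self_le (xbar - a) w
      rw [real_inner_self_eq_norm_sq, real_inner_self_eq_norm_sq, hw] at h
      nlinarith [h]
    have hm0 : 0 ≤ (μ (ball x₀ r₀)).toReal := ENNReal.toReal_nonneg
    nlinarith [mul_nonneg hm0 (sub_nonneg.2 hcs)]
  -- value at the optimal line
  have hv0 : ‖v 0‖ = 1 := hv.1 0
  have hopt : (∫ y in ball x₀ r₀, Metric.infDist y (lineThrough xbar (v 0)) ^ 2 ∂μ)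
      = lam 1 + lam 2 := by
    rw [key_integral μ x₀ r₀ hμ xbar hxbar v hv lam hdiag xbar (v 0) hv0]
    have h00 : (inner ℝ (v 0) (v 0) : ℝ) = 1 := by
      rw [real_inner_self_eq_norm_sq, hv0, one_pow]
    have h01 : (inner ℝ (v 0) (v 1) : ℝ) = 0 := hv.2 (by decide)
    have h02 : (inner ℝ (v 0) (v 2) : ℝ) = 0 := hv.2 (by decide)
    rw [Fin.sum_univ_three, h00, h01, h02, sub_self, norm_zero, inner_zero_left]
    ring
  -- the infimum
  set F : E3 × {v : E3 // v ≠ 0} → ℝ := fun p =>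
    (∫ y in ball x₀ r₀, Metric.infDist y (lineThrough p.1 p.2.1) ^ 2 ∂μ) / r₀ ^ 3 with hF
  have hFlow : ∀ p, (lam 1 + lam 2) / r₀ ^ 3 ≤ F p := by
    rintro ⟨a, v', hv'⟩
    have hw : ‖(‖v'‖⁻¹ : ℝ) • v'‖ = 1 := norm_smul_inv_norm hv'
    have hline : lineThrough a v' = lineThrough a ((‖v'‖⁻¹ : ℝ) • v') :=
      lineThrough_smul a v' hv'
    simp only [hF]
    rw [hline]
    gcongr
    exact hlow a _ hw
  have hv0ne : v 0 ≠ 0 := fun h => by simp [h] at hv0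
  set p₀ : E3 × {v : E3 // v ≠ 0} := (xbar, ⟨v 0, hv0ne⟩) with hp₀
  have hFp₀ : F p₀ = (lam 1 + lam 2) / r₀ ^ 3 := by
    simp only [hF, hp₀]
    rw [hopt]
  have : Nonempty (E3 × {v : E3 // v ≠ 0}) := ⟨p₀⟩
  have hbdd : BddBelow (Set.range F) := by
    refine ⟨(lam 1 + lam 2) / r₀ ^ 3, ?_⟩
    rintro _ ⟨p, rfl⟩; exact hFlow p
  have hmain : JonesD μ x₀ r₀ = (lam 1 + lam 2) / r₀ ^ 3 := by
    refine le_antisymm ?_ (le_ciInf hFlow)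
    exact (ciInf_le hbdd p₀).trans_eq hFp₀
  refine ⟨hmain, ?_⟩
  rw [hmain, hopt]
end
end

section
/- Let N : (0, ∞) → ℝ be nondecreasing, let σ > 0, let A be a positive integer, and let t be a real number with σ < t ≤ 2^A σ. Then ∫_σ^t ( N(32 s) − N(s) ) s⁻¹ ds ≤ 6 (log 2) ( N(2^{A+5} σ) − N(σ) ). -/
open MeasureTheory Metric

noncomputable section

/-- dyadic telescoping estimate for the frequency pinching integral. -/
theorem stmt_16 (N : ℝ → ℝ) (hN : MonotoneOn N (Set.Ioi (0 : ℝ))) (σ : ℝ) (hσ : 0 < σ)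
    (A : ℕ) (hA : 1 ≤ A) (t : ℝ) (ht1 : σ < t) (ht2 : t ≤ 2 ^ A * σ) :
    (∫ s in σ..t, (N (32 * s) - N s) * s⁻¹)
      ≤ 6 * Real.log 2 * (N (2 ^ (A + 5) * σ) - N σ) := by
  have ht0 : (0:ℝ) < t := hσ.trans ht1
  set g : ℝ → ℝ := fun u => N u * u⁻¹ with hg
  have hInt : ∀ a b : ℝ, 0 < a → a ≤ b → IntervalIntegrable g volume a b := by
    intro a b ha hab
    have hsub : Set.uIcc a b ⊆ Set.Ioi 0 := by
      rw [Set.uIcc_of_le hab]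
      intro x hx
      exact lt_of_lt_of_le ha hx.1
    have h1 : IntervalIntegrable N volume a b := (hN.mono hsub).intervalIntegrable
    exact h1.mul_continuousOn
      (ContinuousOn.inv₀ continuousOn_id fun x hx => ne_of_gt (hsub hx))
  have hsubσt : Set.uIcc σ t ⊆ Set.Ioi 0 := by
    rw [Set.uIcc_of_le ht1.le]
    intro x hx
    exact lt_of_lt_of_le hσ hx.1
  have key : (∫ s in σ..t, (N (32*s) - N s) * s⁻¹)
      = (∫ u in t..(32*t), g u) - ∫ u in σ..(32*σ), g u := by
    have h1 : IntervalIntegrable (fun s => N (32*s) * s⁻¹) volume σ t := by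
      have hm : MonotoneOn (fun s => N (32*s)) (Set.uIcc σ t) := by
        intro x hx y hy hxy
        exact hN (by have := hsubσt hx; simp only [Set.mem_Ioi] at this ⊢; linarith)
          (by have := hsubσt hy; simp only [Set.mem_Ioi] at this ⊢; linarith)
          (by linarith)
      exact hm.intervalIntegrable.mul_continuousOn
        (ContinuousOn.inv₀ continuousOn_id fun x hx => ne_of_gt (hsubσt hx))
    have h2 : IntervalIntegrable g volume σ t := hInt σ t hσ ht1.le
    have e1 : (∫ s in σ..t, (N (32*s) - N s) * s⁻¹)
        = (∫ s in σ..t, N (32*s) * s⁻¹) - ∫ s in σ..t, g s := by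
      rw [← intervalIntegral.integral_sub h1 h2]
      congr 1
      ext s
      simp only [g]
      ring
    have e2 : (∫ s in σ..t, N (32*s) * s⁻¹) = ∫ u in 32*σ..32*t, g u := by
      have hpt : ∀ s : ℝ, N (32*s) * s⁻¹ = 32 * g (32*s) := by
        intro s
        by_cases hs : s = 0
        · simp [hs, g]
        · simp only [g, mul_inv]
          field_simp
      simp_rw [hpt]
      rw [intervalIntegral.integral_const_mul,
        intervalIntegral.integral_comp_mul_left g (by norm_num : (32:ℝ) ≠ 0)]
      simp
    have c1 : (∫ u in σ..t, g u) + ∫ u in t..32*t, g u = ∫ u in σ..32*t, g u :=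
      intervalIntegral.integral_add_adjacent_intervals h2 (hInt t (32*t) ht0 (by linarith))
    have c2 : (∫ u in σ..32*σ, g u) + ∫ u in 32*σ..32*t, g u = ∫ u in σ..32*t, g u :=
      intervalIntegral.integral_add_adjacent_intervals (hInt σ _ hσ (by linarith))
        (hInt (32*σ) _ (by linarith) (by linarith))
    rw [e1, e2]
    linarith
  -- upper bound for the outer piece
  have hlog32 : Real.log 32 = 5 * Real.log 2 := by
    rw [show (32:ℝ) = 2 ^ 5 by norm_num, Real.log_pow]
    norm_num
  have hb1 : (∫ u in t..32*t, g u) ≤ N (32*t) * Real.log 32 := by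
    have hcont : IntervalIntegrable (fun u => N (32*t) * u⁻¹) volume t (32*t) := by
      apply ContinuousOn.intervalIntegrable
      apply continuousOn_const.mul
      apply ContinuousOn.inv₀ continuousOn_id
      intro x hx
      rw [Set.uIcc_of_le (by linarith)] at hx
      have : (0:ℝ) < x := lt_of_lt_of_le ht0 hx.1
      exact ne_of_gt this
    have := intervalIntegral.integral_mono_on (by linarith : t ≤ 32*t)
      (hInt t (32*t) ht0 (by linarith)) hcont ?_
    · calc (∫ u in t..32*t, g u) ≤ ∫ u in t..32*t, N (32*t) * u⁻¹ := this
        _ = N (32*t) * Real.log 32 := by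
          rw [intervalIntegral.integral_const_mul, integral_inv
            (by rw [Set.uIcc_of_le (by linarith)]; intro h; linarith [h.1])]
          congr 1
          rw [show (32*t)/t = 32 by field_simp]
    · intro u hu
      have hu0 : 0 < u := lt_of_lt_of_le ht0 hu.1
      have : N u ≤ N (32*t) := hN (Set.mem_Ioi.2 hu0) (Set.mem_Ioi.2 (by linarith))
        (by linarith [hu.2])
      exact mul_le_mul_of_nonneg_right this (by positivity)
  have hb2 : N σ * Real.log 32 ≤ ∫ u in σ..32*σ, g u := by
    have hcont : IntervalIntegrable (fun u => N σ * u⁻¹) volume σ (32*σ) := by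
      apply ContinuousOn.intervalIntegrable
      apply continuousOn_const.mul
      apply ContinuousOn.inv₀ continuousOn_id
      intro x hx
      rw [Set.uIcc_of_le (by linarith)] at hx
      exact ne_of_gt (lt_of_lt_of_le hσ hx.1)
    have := intervalIntegral.integral_mono_on (by linarith : σ ≤ 32*σ)
      hcont (hInt σ (32*σ) hσ (by linarith)) ?_
    · calc N σ * Real.log 32
          = ∫ u in σ..32*σ, N σ * u⁻¹ := by
            rw [intervalIntegral.integral_const_mul, integral_inv
              (by rw [Set.uIcc_of_le (by linarith)]; intro h; linarith [h.1])]
            congr 1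
            rw [show (32*σ)/σ = 32 by field_simp]
        _ ≤ ∫ u in σ..32*σ, g u := this
    · intro u hu
      have hu0 : 0 < u := lt_of_lt_of_le hσ hu.1
      have : N σ ≤ N u := hN (Set.mem_Ioi.2 hσ) (Set.mem_Ioi.2 hu0) hu.1
      exact mul_le_mul_of_nonneg_right this (by positivity)
  -- assemble
  have h2A : (2:ℝ)^(A+5) = 2^A * 32 := by rw [pow_add]; norm_num
  have h32t_le : 32*t ≤ 2^(A+5)*σ := by rw [h2A]; nlinarith
  have hmem1 : (0:ℝ) < 2^(A+5)*σ := by positivity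
  have hNt : N (32*t) ≤ N (2^(A+5)*σ) :=
    hN (Set.mem_Ioi.2 (by linarith)) (Set.mem_Ioi.2 hmem1) h32t_le
  have hNσ : N σ ≤ N (2^(A+5)*σ) := by
    apply hN (Set.mem_Ioi.2 hσ) (Set.mem_Ioi.2 hmem1)
    nlinarith [one_le_pow₀ (by norm_num : (1:ℝ) ≤ 2) (n := A+5)]
  have hlog2 : 0 < Real.log 2 := Real.log_pos (by norm_num)
  rw [key]
  nlinarith [hb1, hb2, hlog32, hNt, hNσ, hlog2]
end
end

section
/- Let m ≥ 1, let x₀ ∈ ℝ³, R > 0, α ∈ ℝ, and let u be a C¹ map from a neighborhood of B̄_R(x₀) to ℝ^m. Define D(r) = ∫_{B_r(x₀)} |∇u|² dx, H(r) = ∫_{∂B_r(x₀)} |u|² dS, and the Weiss energy 𝒲(r) = r^{−(1+2α)} D(r) − α r^{−(2+2α)} H(r). Assume that for every r ∈ (0, R): (i) D(r) = ∫_{∂B_r(x₀)} (∂_ν u · u) dS, where ∂_ν u is the derivative of u in the outward radial direction, and (ii) D is differentiable at r with D′(r) = D(r)/r + 2 ∫_{∂B_r(x₀)} |∂_ν u|²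 dS. Then for every r ∈ (0, R), 𝒲 is differentiable at r and 𝒲′(r) = (2/r^{3+2α}) ∫_{∂B_r(x₀)} | (x − x₀) · ∇u(x) − α u(x) |² dS(x), where (x − x₀) · ∇u(x) denotes the directional derivative Du(x)[x − x₀]. -/
open MeasureTheory Metric

noncomputable section

namespace Stmt17Aux

lemma msSphere (x : E3) (r : ℝ) : MeasurableSet (sphere x r) :=
  (isClosed_sphere).measurableSet

lemma lipsin : LipschitzWith 1 Real.sin :=
  lipschitzWith_of_nnnorm_deriv_le Real.differentiable_sin fun x => by
    rw [Real.deriv_sin]; exact_mod_cast NNReal.coe_le_coe.mp (by simpa using Real.abs_cos_le_one x)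

lemma lipcos : LipschitzWith 1 Real.cos :=
  lipschitzWith_of_nnnorm_deriv_le Real.differentiable_cos fun x => by
    rw [Real.deriv_cos]; exact_mod_cast NNReal.coe_le_coe.mp (by simpa using Real.abs_sin_le_one x)

lemma mul_diff_le {a b c d : ℝ} (hb : |b| ≤ 1) (hc : |c| ≤ 1) :
    |a * b - c * d| ≤ |a - c| + |b - d| := by
  have h : a * b - c * d = (a - c) * b + c * (b - d) := by ring
  rw [h]
  calc |(a - c) * b + c * (b - d)| ≤ |(a-c)*b| + |c*(b-d)| := abs_add_le _ _
    _ ≤ |a - c| * 1 + 1 * |b - d| := by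
        rw [abs_mul, abs_mul]
        gcongr
    _ = |a - c| + |b - d| := by ring

/-- spherical coordinates map -/
def sph (p : Fin 2 → ℝ) : E3 :=
  (WithLp.equiv 2 (Fin 3 → ℝ)).symm
    ![Real.sin (p 0) * Real.cos (p 1), Real.sin (p 0) * Real.sin (p 1), Real.cos (p 0)]

lemma sph_lip : LipschitzWith 4 sph := by
  apply LipschitzWith.of_dist_le_mul
  intro p q
  have key : ∀ i : Fin 3, dist (sph p i) (sph q i) ≤ 2 * dist p q := by
    have h0 : |p 0 - q 0| ≤ dist p q := by
      simpa [Real.dist_eq] using dist_le_pi_dist p q 0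
    have h1 : |p 1 - q 1| ≤ dist p q := by
      simpa [Real.dist_eq] using dist_le_pi_dist p q 1
    have hsin : ∀ a b : ℝ, |Real.sin a - Real.sin b| ≤ |a - b| := fun a b => by
      have := lipsin.dist_le_mul a b
      simpa [Real.dist_eq] using this
    have hcos : ∀ a b : ℝ, |Real.cos a - Real.cos b| ≤ |a - b| := fun a b => by
      have := lipcos.dist_le_mul a b
      simpa [Real.dist_eq] using this
    intro i
    fin_cases i <;>
      simp only [sph, WithLp.equiv_symm_apply, PiLp.toLp_apply, Real.dist_eq] <;>
      [skip; skip; skip]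
    · calc |Real.sin (p 0) * Real.cos (p 1) - Real.sin (q 0) * Real.cos (q 1)|
          ≤ |Real.sin (p 0) - Real.sin (q 0)| + |Real.cos (p 1) - Real.cos (q 1)| :=
            mul_diff_le (Real.abs_cos_le_one _) (Real.abs_sin_le_one _)
        _ ≤ |p 0 - q 0| + |p 1 - q 1| := add_le_add (hsin _ _) (hcos _ _)
        _ ≤ dist p q + dist p q := add_le_add h0 h1
        _ = 2 * dist p q := by ring
    · calc |Real.sin (p 0) * Real.sin (p 1) - Real.sin (q 0) * Real.sin (q 1)|
          ≤ |Real.sin (p 0) - Real.sin (q 0)| + |Real.sin (p 1) - Real.sin (q 1)| :=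
            mul_diff_le (Real.abs_sin_le_one _) (Real.abs_sin_le_one _)
        _ ≤ |p 0 - q 0| + |p 1 - q 1| := add_le_add (hsin _ _) (hsin _ _)
        _ ≤ dist p q + dist p q := add_le_add h0 h1
        _ = 2 * dist p q := by ring
    · calc |Real.cos (p 0) - Real.cos (q 0)| ≤ |p 0 - q 0| := hcos _ _
        _ ≤ dist p q := h0
        _ ≤ 2 * dist p q := by nlinarith [dist_nonneg (x := p) (y := q)]
  have hd : 0 ≤ dist p q := dist_nonneg
  rw [EuclideanSpace.dist_eq]
  have : ∑ i : Fin 3, dist (sph p i) (sph q i) ^ 2 ≤ 3 * (2 * dist p q)^2 := by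
    have := key 0; have := key 1; have := key 2
    have sq : ∀ i : Fin 3, dist (sph p i) (sph q i) ^ 2 ≤ (2 * dist p q)^2 := fun i => by
      have := key i
      nlinarith [dist_nonneg (x := sph p i) (y := sph q i)]
    calc ∑ i : Fin 3, dist (sph p i) (sph q i) ^ 2 ≤ ∑ _i : Fin 3, (2 * dist p q)^2 :=
          Finset.sum_le_sum fun i _ => sq i
      _ = 3 * (2 * dist p q)^2 := by norm_num [Finset.sum_const]
  calc Real.sqrt (∑ i : Fin 3, dist (sph p i) (sph q i) ^ 2)
      ≤ Real.sqrt ((4 * dist p q)^2) := Real.sqrt_le_sqrt (by nlinarith)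
    _ = 4 * dist p q := Real.sqrt_sq (by positivity)
    _ = (4 : NNReal) * dist p q := by norm_num

lemma sph_surj : sphere (0:E3) 1 ⊆ sph '' (closedBall (0 : Fin 2 → ℝ) 4) := by
  intro x hx
  have hx1 : ‖x‖ = 1 := by simpa using mem_sphere_zero_iff_norm.mp hx
  have hsum : ∑ i : Fin 3, (x i) ^ 2 = 1 := by
    have := EuclideanSpace.norm_eq x
    rw [hx1] at this
    have h2 : Real.sqrt (∑ i : Fin 3, ‖x i‖ ^ 2) = 1 := this.symm
    have := Real.sqrt_eq_one.mp h2
    simpa [Real.norm_eq_abs, sq_abs] using this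
  have hx2 : (x 2)^2 ≤ 1 := by
    have h01 : 0 ≤ (x 0)^2 + (x 1)^2 := by positivity
    have : (x 0)^2 + (x 1)^2 + (x 2)^2 = 1 := by
      rw [← hsum]; simp [Fin.sum_univ_three]
    linarith
  have hx2' : -1 ≤ x 2 ∧ x 2 ≤ 1 := abs_le.mp (abs_le_one_iff_mul_self_le_one.mpr (by nlinarith))
  set z : ℂ := ⟨x 0, x 1⟩ with hz
  set φ := Real.arccos (x 2) with hφ
  have hcosφ : Real.cos φ = x 2 := Real.cos_arccos hx2'.1 hx2'.2
  have hsinφ : Real.sin φ = ‖z‖ := by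
    rw [hφ, Real.sin_arccos]
    have : ‖z‖ = Real.sqrt ((x 0)^2 + (x 1)^2) := by
      rw [Complex.norm_def, Complex.normSq_mk]; ring_nf
    rw [this]
    congr 1
    have : (x 0)^2 + (x 1)^2 + (x 2)^2 = 1 := by rw [← hsum]; simp [Fin.sum_univ_three]
    linarith
  refine ⟨![φ, Complex.arg z], ?_, ?_⟩
  · rw [mem_closedBall, dist_zero_right]
    rw [pi_norm_le_iff_of_nonneg (by norm_num)]
    intro i
    fin_cases i
    · show ‖φ‖ ≤ 4
      rw [Real.norm_eq_abs, abs_of_nonneg (Real.arccos_nonneg _)]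
      linarith [Real.arccos_le_pi (x 2), Real.pi_le_four]
    · show ‖Complex.arg z‖ ≤ 4
      rw [Real.norm_eq_abs]
      linarith [Complex.abs_arg_le_pi z, Real.pi_le_four]
  · ext i
    fin_cases i <;>
      simp only [sph, WithLp.equiv_symm_apply, PiLp.toLp_apply, Matrix.cons_val_zero, Matrix.cons_val_one,
        Matrix.head_cons]
    · show Real.sin φ * Real.cos (Complex.arg z) = x 0
      rw [hsinφ]
      exact Complex.norm_mul_cos_arg z
    · show Real.sin φ * Real.sin (Complex.arg z) = x 1
      rw [hsinφ]
      exact Complex.norm_mul_sin_arg z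
    · exact hcosφ

lemma sphere_measure_finite : μH[(2:ℝ)] (sphere (0:E3) 1) ≠ ⊤ := by
  have h1 : μH[(2:ℝ)] (sphere (0:E3) 1) ≤ μH[(2:ℝ)] (sph '' (closedBall (0 : Fin 2 → ℝ) 4)) :=
    measure_mono sph_surj
  have h2 : μH[(2:ℝ)] (sph '' (closedBall (0 : Fin 2 → ℝ) 4)) ≤
      (4:NNReal) ^ (2:ℝ) * μH[(2:ℝ)] (closedBall (0 : Fin 2 → ℝ) 4) :=
    sph_lip.hausdorffMeasure_image_le (by norm_num) _
  have h3 : (μH[(2:ℝ)] : Measure (Fin 2 → ℝ)) = volume := by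
    have := hausdorffMeasure_pi_real (ι := Fin 2)
    simpa using this
  have h4 : μH[(2:ℝ)] (closedBall (0 : Fin 2 → ℝ) 4) < ⊤ := by
    rw [h3]; exact measure_closedBall_lt_top
  refine ne_top_of_le_ne_top ?_ (h1.trans h2)
  exact (ENNReal.mul_lt_top (ENNReal.rpow_lt_top_of_nonneg (by norm_num) (by simp)) h4).ne

section Scale

variable (x₀ : E3) {r : ℝ}

lemma homothety_coe (r : ℝ) : ⇑(AffineMap.homothety (0:E3) r) = fun y : E3 => r • y := by
  funext y; simp [AffineMap.homothety_apply]

lemma map_scale (hr : 0 < r) :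
    (ENNReal.ofNNReal (‖r‖₊ ^ (2:ℝ))) • Measure.map (fun θ : E3 => x₀ + r • θ) μH[(2:ℝ)]
      = μH[(2:ℝ)] := by
  have hmeas : Measurable (fun θ : E3 => x₀ + r • θ) := by fun_prop
  ext A hA
  rw [Measure.smul_apply, Measure.map_apply hmeas hA]
  have hpre : (fun θ : E3 => x₀ + r • θ) ⁻¹' A
      = (fun θ : E3 => r • θ) ⁻¹' ((fun y : E3 => x₀ + y) ⁻¹' A) := rfl
  rw [hpre]
  have h1 : μH[(2:ℝ)] ((fun θ : E3 => r • θ) ⁻¹' ((fun y : E3 => x₀ + y) ⁻¹' A))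
      = (‖r‖₊⁻¹ ^ (2:ℝ)) • μH[(2:ℝ)] ((fun y : E3 => x₀ + y) ⁻¹' A) := by
    rw [← homothety_coe r]
    exact hausdorffMeasure_homothety_preimage (by norm_num) 0 hr.ne' _
  rw [h1, measure_preimage_add]
  rw [smul_eq_mul, ENNReal.smul_def, smul_eq_mul, ← mul_assoc, ← ENNReal.coe_mul,
    ← NNReal.mul_rpow, mul_inv_cancel₀, NNReal.one_rpow, ENNReal.coe_one, one_mul]
  simpa using hr.ne'

lemma restrict_scale (hr : 0 < r) :
    μH[(2:ℝ)].restrict (sphere x₀ r)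
      = (ENNReal.ofNNReal (‖r‖₊ ^ (2:ℝ))) •
        Measure.map (fun θ : E3 => x₀ + r • θ) (μH[(2:ℝ)].restrict (sphere (0:E3) 1)) := by
  have hmeas : Measurable (fun θ : E3 => x₀ + r • θ) := by fun_prop
  have hpre : (fun θ : E3 => x₀ + r • θ) ⁻¹' (sphere x₀ r) = sphere (0:E3) 1 := by
    ext θ
    simp only [Set.mem_preimage, mem_sphere_iff_norm, add_sub_cancel_left, norm_smul,
      Real.norm_eq_abs, abs_of_pos hr, sub_zero]
    rw [mul_right_eq_self₀]
    simp [hr.ne']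
  rw [← hpre, ← Measure.restrict_map hmeas (msSphere x₀ r), ← Measure.restrict_smul,
    map_scale x₀ hr]

lemma embed (hr : 0 < r) : MeasurableEmbedding (fun θ : E3 => x₀ + r • θ) := by
  have e : E3 ≃ₜ E3 := (Homeomorph.smulOfNeZero r hr.ne').trans
    (Homeomorph.addLeft x₀)
  exact ((Homeomorph.smulOfNeZero r hr.ne').trans (Homeomorph.addLeft x₀)).measurableEmbedding

lemma sphere_scale (hr : 0 < r) (f : E3 → ℝ) :
    ∫ y in sphere x₀ r, f y ∂μH[(2:ℝ)]
      = r ^ 2 * ∫ θ in sphere (0:E3) 1, f (x₀ + r • θ) ∂μH[(2:ℝ)] := by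
  rw [restrict_scale x₀ hr, integral_smul_measure, (embed x₀ hr).integral_map]
  congr 1
  rw [ENNReal.coe_toReal, NNReal.coe_rpow, coe_nnnorm, Real.norm_eq_abs, abs_of_pos hr,
    ← Real.rpow_natCast r 2]
  norm_num

lemma sphere_measure_scale (hr : 0 < r) :
    μH[(2:ℝ)] (sphere x₀ r) = (ENNReal.ofNNReal (‖r‖₊ ^ (2:ℝ))) * μH[(2:ℝ)] (sphere (0:E3) 1) := by
  have h := congrArg (fun μ : Measure E3 => μ Set.univ) (restrict_scale x₀ hr)
  simpa [Measure.restrict_apply_univ, Measure.smul_apply,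
    Measure.map_apply (by fun_prop : Measurable (fun θ : E3 => x₀ + r • θ)) MeasurableSet.univ,
    ENNReal.smul_def] using h

instance : IsFiniteMeasure (μH[(2:ℝ)].restrict (sphere (0:E3) 1)) := by
  constructor
  rw [Measure.restrict_apply_univ]
  exact lt_top_iff_ne_top.mpr sphere_measure_finite

lemma integrable_sphere {f : E3 → ℝ} (hf : ContinuousOn f (sphere (0:E3) 1)) :
    Integrable f (μH[(2:ℝ)].restrict (sphere (0:E3) 1)) := by
  obtain ⟨C, hC⟩ := (isCompact_sphere (0:E3) 1).exists_bound_of_continuousOn hf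
  exact Integrable.mono' (integrable_const C) (hf.aestronglyMeasurable (msSphere 0 1))
    ((ae_restrict_mem (msSphere 0 1)).mono fun θ hθ => hC θ hθ)

end Scale


section Deriv

variable {m : ℕ} {u : E3 → EuclideanSpace ℝ (Fin m)} {V : Set E3} {x₀ : E3} {R r : ℝ}

set_option maxHeartbeats 2000000 in
lemma hasDerivAt_F (hVopen : IsOpen V) (hVsub : closedBall x₀ R ⊆ V)
    (hVu : ContDiffOn ℝ 1 u V) (hr : 0 < r) (hrR : r < R) :
    HasDerivAt (fun t => ∫ θ in sphere (0:E3) 1, ‖u (x₀ + t • θ)‖^2 ∂μH[(2:ℝ)])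
      (∫ θ in sphere (0:E3) 1,
        2 * (inner ℝ (fderiv ℝ u (x₀ + r • θ) θ) (u (x₀ + r • θ)) : ℝ) ∂μH[(2:ℝ)]) r := by
  have hR : 0 < R := hr.trans hrR
  have hcu : ContinuousOn u V := hVu.continuousOn
  have hcf : ContinuousOn (fderiv ℝ u) V := hVu.continuousOn_fderiv_of_isOpen hVopen le_rfl
  set ε := min r (R - r) with hε
  have hεpos : 0 < ε := lt_min hr (by linarith)
  have hball : ∀ t ∈ ball r ε, 0 < t ∧ t < R := by
    intro t ht
    rw [mem_ball, Real.dist_eq, abs_sub_lt_iff] at ht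
    constructor
    · have := min_le_left r (R - r); linarith [ht.2]
    · have := min_le_right r (R - r); linarith [ht.1]
  have hmem : ∀ (t : ℝ), 0 < t → t < R → ∀ θ ∈ sphere (0:E3) 1, x₀ + t • θ ∈ V := by
    intro t ht htR θ hθ
    apply hVsub
    rw [mem_closedBall, dist_eq_norm, add_sub_cancel_left, norm_smul, Real.norm_eq_abs,
      abs_of_pos ht, mem_sphere_zero_iff_norm.mp hθ, mul_one]
    exact htR.le
  have hmapsTo : ∀ (t : ℝ), 0 < t → t < R →
      Set.MapsTo (fun θ : E3 => x₀ + t • θ) (sphere (0:E3) 1) V :=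
    fun t ht htR θ hθ => hmem t ht htR θ hθ
  have hcm : ∀ t : ℝ, Continuous (fun θ : E3 => x₀ + t • θ) :=
    fun t => continuous_const.add (continuous_id.const_smul t)
  -- compactness bounds
  obtain ⟨C1, hC1⟩ := (isCompact_closedBall x₀ R).exists_bound_of_continuousOn (hcu.mono hVsub)
  obtain ⟨C2, hC2⟩ := (isCompact_closedBall x₀ R).exists_bound_of_continuousOn (hcf.mono hVsub)
  have hC1nn : 0 ≤ C1 := le_trans (norm_nonneg _) (hC1 x₀ (mem_closedBall_self hR.le))
  have hF_meas : ∀ᶠ t in nhds r, AEStronglyMeasurable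
      (fun θ : E3 => ‖u (x₀ + t • θ)‖^2) (μH[(2:ℝ)].restrict (sphere (0:E3) 1)) := by
    filter_upwards [Metric.ball_mem_nhds r hεpos] with t ht
    obtain ⟨ht0, htR⟩ := hball t ht
    exact ((((hcu.comp (hcm t).continuousOn (hmapsTo t ht0 htR)).norm).pow 2).aestronglyMeasurable
      (msSphere 0 1))
  have hF_int : Integrable (fun θ : E3 => ‖u (x₀ + r • θ)‖^2)
      (μH[(2:ℝ)].restrict (sphere (0:E3) 1)) :=
    integrable_sphere (((hcu.comp (hcm r).continuousOn (hmapsTo r hr hrR)).norm).pow 2)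
  have hF'_cont : ContinuousOn
      (fun θ : E3 => 2 * (inner ℝ (fderiv ℝ u (x₀ + r • θ) θ) (u (x₀ + r • θ)) : ℝ))
      (sphere (0:E3) 1) := by
    apply ContinuousOn.mul continuousOn_const
    exact ContinuousOn.inner
      ((hcf.comp (hcm r).continuousOn (hmapsTo r hr hrR)).clm_apply continuousOn_id)
      (hcu.comp (hcm r).continuousOn (hmapsTo r hr hrR))
  have hF'_meas : AEStronglyMeasurable
      (fun θ : E3 => 2 * (inner ℝ (fderiv ℝ u (x₀ + r • θ) θ) (u (x₀ + r • θ)) : ℝ))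
      (μH[(2:ℝ)].restrict (sphere (0:E3) 1)) :=
    hF'_cont.aestronglyMeasurable (msSphere 0 1)
  have h_bound : ∀ᵐ θ ∂(μH[(2:ℝ)].restrict (sphere (0:E3) 1)), ∀ t ∈ ball r ε,
      ‖2 * (inner ℝ (fderiv ℝ u (x₀ + t • θ) θ) (u (x₀ + t • θ)) : ℝ)‖ ≤ 2 * C2 * C1 := by
    filter_upwards [ae_restrict_mem (msSphere 0 1)] with θ hθ t ht
    obtain ⟨ht0, htR⟩ := hball t ht
    set y := x₀ + t • θ
    have hyB : y ∈ closedBall x₀ R := by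
      rw [mem_closedBall, dist_eq_norm, add_sub_cancel_left, norm_smul, Real.norm_eq_abs,
        abs_of_pos ht0, mem_sphere_zero_iff_norm.mp hθ, mul_one]
      exact htR.le
    have hθ1 : ‖θ‖ = 1 := mem_sphere_zero_iff_norm.mp hθ
    rw [Real.norm_eq_abs, abs_mul]
    calc |2| * |(inner ℝ (fderiv ℝ u y θ) (u y) : ℝ)|
        ≤ 2 * (‖fderiv ℝ u y θ‖ * ‖u y‖) := by
          rw [abs_two]
          exact mul_le_mul_of_nonneg_left (abs_real_inner_le_norm _ _) (by norm_num)
      _ ≤ 2 * C2 * C1 := by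
          have h1 : ‖fderiv ℝ u y θ‖ ≤ C2 := by
            have := ((fderiv ℝ u y).le_opNorm θ).trans
              (mul_le_mul_of_nonneg_right (hC2 y hyB) (norm_nonneg θ))
            rwa [hθ1, mul_one] at this
          have h2 : ‖u y‖ ≤ C1 := hC1 y hyB
          have h3 : (0:ℝ) ≤ ‖fderiv ℝ u y θ‖ := norm_nonneg _
          have h4 : (0:ℝ) ≤ ‖u y‖ := norm_nonneg _
          nlinarith
  have h_diff : ∀ᵐ θ ∂(μH[(2:ℝ)].restrict (sphere (0:E3) 1)), ∀ t ∈ ball r ε,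
      HasDerivAt (fun t : ℝ => ‖u (x₀ + t • θ)‖^2)
        (2 * (inner ℝ (fderiv ℝ u (x₀ + t • θ) θ) (u (x₀ + t • θ)) : ℝ)) t := by
    filter_upwards [ae_restrict_mem (msSphere 0 1)] with θ hθ t ht
    obtain ⟨ht0, htR⟩ := hball t ht
    set y := x₀ + t • θ with hy
    have hyV : y ∈ V := hmem t ht0 htR θ hθ
    have hdu : HasFDerivAt u (fderiv ℝ u y) y :=
      ((hVu.differentiableOn one_ne_zero).differentiableAt (hVopen.mem_nhds hyV)).hasFDerivAt
    have hline : HasDerivAt (fun t : ℝ => x₀ + t • θ) θ t := by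
      simpa using ((hasDerivAt_id t).smul_const θ).const_add x₀
    have hcomp : HasDerivAt (fun t : ℝ => u (x₀ + t • θ)) (fderiv ℝ u y θ) t := by
      exact hdu.comp_hasDerivAt t hline
    have hinner := HasDerivAt.inner ℝ hcomp hcomp
    have hfun : (fun t : ℝ => ‖u (x₀ + t • θ)‖^2)
        = fun t : ℝ => (inner ℝ (u (x₀ + t • θ)) (u (x₀ + t • θ)) : ℝ) := by
      funext s; rw [real_inner_self_eq_norm_sq]
    rw [hfun]
    refine hinner.congr_deriv ?_
    rw [real_inner_comm]
    ring
  exact (hasDerivAt_integral_of_dominated_loc_of_deriv_le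
    (F := fun (t : ℝ) (θ : E3) => ‖u (x₀ + t • θ)‖^2)
    (F' := fun (t : ℝ) (θ : E3) => 2 * (inner ℝ (fderiv ℝ u (x₀ + t • θ) θ) (u (x₀ + t • θ)) : ℝ))
    (bound := fun _ => 2 * C2 * C1)
    (Metric.ball_mem_nhds r hεpos) hF_meas hF_int hF'_meas h_bound (integrable_const _) h_diff).2

end Deriv

end Stmt17Aux

open Stmt17Aux

/-- the classical Weiss monotonicity formula. -/
theorem stmt_17 {m : ℕ} (hm : 1 ≤ m) (x₀ : E3) (R : ℝ) (hR : 0 < R) (α : ℝ)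
    (u : E3 → EuclideanSpace ℝ (Fin m))
    (hu : ∃ V : Set E3, IsOpen V ∧ closedBall x₀ R ⊆ V ∧ ContDiffOn ℝ 1 u V)
    (D H W : ℝ → ℝ)
    (hD : ∀ r : ℝ, D r = ∫ y in ball x₀ r, gradSq u y)
    (hH : ∀ r : ℝ, H r = sphHeight u x₀ r)
    (hW : ∀ r : ℝ, W r = r ^ (-(1 + 2 * α)) * D r - α * r ^ (-(2 + 2 * α)) * H r)
    (hDrep : ∀ r ∈ Set.Ioo (0 : ℝ) R,
      D r = ∫ y in sphere x₀ r, (inner ℝ (fderiv ℝ u y (nu x₀ y)) (u y) : ℝ) ∂(μH[2]))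
    (hDderiv : ∀ r ∈ Set.Ioo (0 : ℝ) R,
      HasDerivAt D
        (D r / r + 2 * ∫ y in sphere x₀ r, ‖fderiv ℝ u y (nu x₀ y)‖ ^ 2 ∂(μH[2])) r) :
    ∀ r ∈ Set.Ioo (0 : ℝ) R,
      HasDerivAt W
        ((2 / r ^ (3 + 2 * α)) *
          ∫ y in sphere x₀ r, ‖fderiv ℝ u y (y - x₀) - α • u y‖ ^ 2 ∂(μH[2])) r := by

  rintro r ⟨hr0, hrR⟩
  obtain ⟨V, hVopen, hVsub, hVu⟩ := hu
  have hR : 0 < R := hr0.trans hrR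
  have hcu : ContinuousOn u V := hVu.continuousOn
  have hcf : ContinuousOn (fderiv ℝ u) V := hVu.continuousOn_fderiv_of_isOpen hVopen le_rfl
  have hcm : Continuous (fun θ : E3 => x₀ + r • θ) :=
    continuous_const.add (continuous_id.const_smul r)
  have hmapsTo : Set.MapsTo (fun θ : E3 => x₀ + r • θ) (sphere (0:E3) 1) V := by
    intro θ hθ
    apply hVsub
    rw [mem_closedBall, dist_eq_norm, add_sub_cancel_left, norm_smul, Real.norm_eq_abs,
      abs_of_pos hr0, mem_sphere_zero_iff_norm.mp hθ, mul_one]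
    exact hrR.le
  have hcuS : ContinuousOn (fun θ : E3 => u (x₀ + r • θ)) (sphere (0:E3) 1) :=
    hcu.comp hcm.continuousOn hmapsTo
  have hcfS : ContinuousOn (fun θ : E3 => fderiv ℝ u (x₀ + r • θ)) (sphere (0:E3) 1) :=
    hcf.comp hcm.continuousOn hmapsTo
  have hcfθ : ContinuousOn (fun θ : E3 => fderiv ℝ u (x₀ + r • θ) θ) (sphere (0:E3) 1) :=
    hcfS.clm_apply continuousOn_id
  set I0 := ∫ θ in sphere (0:E3) 1, ‖u (x₀ + r • θ)‖^2 ∂μH[(2:ℝ)] with hI0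
  set I1 := ∫ θ in sphere (0:E3) 1,
    (inner ℝ (fderiv ℝ u (x₀ + r • θ) θ) (u (x₀ + r • θ)) : ℝ) ∂μH[(2:ℝ)] with hI1
  set I2 := ∫ θ in sphere (0:E3) 1, ‖fderiv ℝ u (x₀ + r • θ) θ‖^2 ∂μH[(2:ℝ)] with hI2
  have int0 : Integrable (fun θ : E3 => ‖u (x₀ + r • θ)‖^2)
      (μH[(2:ℝ)].restrict (sphere (0:E3) 1)) := integrable_sphere ((hcuS.norm).pow 2)
  have int1 : Integrable
      (fun θ : E3 => (inner ℝ (fderiv ℝ u (x₀ + r • θ) θ) (u (x₀ + r • θ)) : ℝ))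
      (μH[(2:ℝ)].restrict (sphere (0:E3) 1)) := integrable_sphere (hcfθ.inner hcuS)
  have int2 : Integrable (fun θ : E3 => ‖fderiv ℝ u (x₀ + r • θ) θ‖^2)
      (μH[(2:ℝ)].restrict (sphere (0:E3) 1)) := integrable_sphere ((hcfθ.norm).pow 2)
  -- `nu` on the rescaled sphere
  have hnu : ∀ θ ∈ sphere (0:E3) 1, nu x₀ (x₀ + r • θ) = θ := by
    intro θ hθ
    have hθ1 : ‖θ‖ = 1 := mem_sphere_zero_iff_norm.mp hθ
    rw [nu, add_sub_cancel_left, norm_smul, Real.norm_eq_abs, abs_of_pos hr0, hθ1, mul_one,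
      smul_smul, inv_mul_cancel₀ hr0.ne', one_smul]
  -- H t = t^2 * (unit sphere integral)
  have hHt : ∀ t : ℝ, 0 < t →
      H t = t^2 * ∫ θ in sphere (0:E3) 1, ‖u (x₀ + t • θ)‖^2 ∂μH[(2:ℝ)] := by
    intro t ht
    rw [hH, sphHeight, sphere_scale x₀ ht]
  have hHr : H r = r^2 * I0 := hHt r hr0
  -- D r = r^2 * I1
  have hDr : D r = r^2 * I1 := by
    rw [hDrep r ⟨hr0, hrR⟩, sphere_scale x₀ hr0]
    congr 1
    refine setIntegral_congr_fun (msSphere 0 1) fun θ hθ => ?_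
    rw [hnu θ hθ]
  -- the normal-derivative integral
  have hJ : (∫ y in sphere x₀ r, ‖fderiv ℝ u y (nu x₀ y)‖^2 ∂μH[(2:ℝ)]) = r^2 * I2 := by
    rw [sphere_scale x₀ hr0]
    congr 1
    refine setIntegral_congr_fun (msSphere 0 1) fun θ hθ => ?_
    rw [hnu θ hθ]
  -- derivative of H
  have hFd := hasDerivAt_F hVopen hVsub hVu hr0 hrR
  have hFd' : HasDerivAt (fun t => ∫ θ in sphere (0:E3) 1, ‖u (x₀ + t • θ)‖^2 ∂μH[(2:ℝ)])
      (2 * I1) r := by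
    convert hFd using 1
    rw [hI1, ← integral_const_mul]
  have hpow : HasDerivAt (fun t : ℝ => t^2) (2*r) r := by simpa using hasDerivAt_pow 2 r
  have hHd : HasDerivAt H (2*r*I0 + r^2*(2*I1)) r := by
    refine HasDerivAt.congr_of_eventuallyEq (hpow.mul hFd') ?_
    filter_upwards [(isOpen_Ioo (a := (0:ℝ)) (b := R)).mem_nhds ⟨hr0, hrR⟩] with t ht
    exact hHt t ht.1
  -- derivative of D
  have hDd : HasDerivAt D (D r / r + 2 * (r^2 * I2)) r := by
    have := hDderiv r ⟨hr0, hrR⟩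
    rwa [hJ] at this
  -- the target integral
  have hT : (∫ y in sphere x₀ r, ‖fderiv ℝ u y (y - x₀) - α • u y‖^2 ∂μH[(2:ℝ)])
      = r^2 * (r^2*I2 - 2*α*r*I1 + α^2*I0) := by
    rw [sphere_scale x₀ hr0]
    congr 1
    have hptwise : Set.EqOn
        (fun θ : E3 => ‖fderiv ℝ u (x₀ + r • θ) ((x₀ + r • θ) - x₀) - α • u (x₀ + r • θ)‖^2)
        (fun θ : E3 => r^2 * ‖fderiv ℝ u (x₀ + r • θ) θ‖^2
          - 2*α*r * (inner ℝ (fderiv ℝ u (x₀ + r • θ) θ) (u (x₀ + r • θ)) : ℝ)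
          + α^2 * ‖u (x₀ + r • θ)‖^2) (sphere (0:E3) 1) := by
      intro θ hθ
      simp only
      rw [add_sub_cancel_left, ContinuousLinearMap.map_smul]
      rw [norm_sub_sq_real, norm_smul, norm_smul, real_inner_smul_left, real_inner_smul_right,
        mul_pow, mul_pow, Real.norm_eq_abs, Real.norm_eq_abs, sq_abs, sq_abs]
      ring
    have intA : Integrable (fun θ : E3 => r^2 * ‖fderiv ℝ u (x₀ + r • θ) θ‖^2
        - 2*α*r * (inner ℝ (fderiv ℝ u (x₀ + r • θ) θ) (u (x₀ + r • θ)) : ℝ))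
        (μH[(2:ℝ)].restrict (sphere (0:E3) 1)) := (int2.const_mul _).sub (int1.const_mul _)
    have intC : Integrable (fun θ : E3 => α^2 * ‖u (x₀ + r • θ)‖^2)
        (μH[(2:ℝ)].restrict (sphere (0:E3) 1)) := int0.const_mul _
    rw [setIntegral_congr_fun (msSphere 0 1) hptwise,
      integral_add intA intC,
      integral_sub (int2.const_mul _) (int1.const_mul _),
      integral_const_mul, integral_const_mul, integral_const_mul]
  -- put W together
  have hWfun : W = fun t : ℝ =>
      t ^ (-(1 + 2*α)) * D t - α * (t ^ (-(2 + 2*α)) * H t) := by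
    funext t
    rw [hW t]
    ring
  have hp1 : HasDerivAt (fun t : ℝ => t ^ (-(1 + 2*α)))
      (-(1 + 2*α) * r ^ (-(1 + 2*α) - 1)) r :=
    Real.hasDerivAt_rpow_const (Or.inl hr0.ne')
  have hp2 : HasDerivAt (fun t : ℝ => t ^ (-(2 + 2*α)))
      (-(2 + 2*α) * r ^ (-(2 + 2*α) - 1)) r :=
    Real.hasDerivAt_rpow_const (Or.inl hr0.ne')
  have hWd : HasDerivAt W
      ((-(1 + 2*α) * r ^ (-(1 + 2*α) - 1) * D r + r ^ (-(1 + 2*α)) * (D r / r + 2 * (r^2 * I2)))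
        - α * (-(2 + 2*α) * r ^ (-(2 + 2*α) - 1) * H r
            + r ^ (-(2 + 2*α)) * (2*r*I0 + r^2*(2*I1)))) r := by
    rw [hWfun]
    exact (hp1.mul hDd).sub ((hp2.mul hHd).const_mul α)
  convert hWd using 1
  -- now the algebraic identity
  have hq : (0:ℝ) < r ^ ((3:ℝ) + 2*α) := Real.rpow_pos_of_pos hr0 _
  have e1 : r ^ (-(1 + 2*α)) = r^2 / r ^ ((3:ℝ) + 2*α) := by
    rw [eq_div_iff hq.ne', ← Real.rpow_add hr0,
      show -(1 + 2*α) + ((3:ℝ) + 2*α) = ((2:ℕ):ℝ) by push_cast; ring, Real.rpow_natCast]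
  have e2 : r ^ (-(2 + 2*α)) = r / r ^ ((3:ℝ) + 2*α) := by
    rw [eq_div_iff hq.ne', ← Real.rpow_add hr0,
      show -(2 + 2*α) + ((3:ℝ) + 2*α) = (1:ℝ) by ring, Real.rpow_one]
  have e3 : r ^ (-(1 + 2*α) - 1) = r / r ^ ((3:ℝ) + 2*α) := by
    rw [eq_div_iff hq.ne', ← Real.rpow_add hr0,
      show -(1 + 2*α) - 1 + ((3:ℝ) + 2*α) = (1:ℝ) by ring, Real.rpow_one]
  have e4 : r ^ (-(2 + 2*α) - 1) = 1 / r ^ ((3:ℝ) + 2*α) := by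
    rw [eq_div_iff hq.ne', ← Real.rpow_add hr0,
      show -(2 + 2*α) - 1 + ((3:ℝ) + 2*α) = (0:ℝ) by ring, Real.rpow_zero]
  rw [hT, hDr, hHr, e1, e2, e3, e4]
  field_simp
  ring
end
end

section
/- Let m ≥ 1 and let u : ℝ³ → ℝ^m be a continuous map that is not identically zero. Let x₁ ≠ x₂ be points of ℝ³ and let α₁, α₂ > 0 be such that u(x_i + λ(x − x_i)) = λ^{α_i} u(x) for every x ∈ ℝ³, every λ > 0, and i = 1, 2 (i.e., u is homogeneous of degree α_i about x_i). Then α₁ = α₂, and u is invariant under translations in the direction x₂ − x₁, i.e., u(x + t(x₂ − x₁)) = u(x) for every x ∈ ℝ³ and every t ∈ ℝ. -/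
open MeasureTheory Metric

noncomputable section

/-- a nontrivial continuous map homogeneous about two distinct points has
equal homogeneity degrees and is invariant in the direction joining the two points. -/
theorem stmt_18 {m : ℕ} (hm : 1 ≤ m) (u : E3 → EuclideanSpace ℝ (Fin m))
    (hcont : Continuous u) (hnontriv : ∃ x, u x ≠ 0)
    (x₁ x₂ : E3) (hne : x₁ ≠ x₂) (α₁ α₂ : ℝ) (hα₁ : 0 < α₁) (hα₂ : 0 < α₂)
    (h1 : ∀ (x : E3) (lam : ℝ), 0 < lam →
      u (x₁ + lam • (x - x₁)) = (lam ^ α₁) • u x)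
    (h2 : ∀ (x : E3) (lam : ℝ), 0 < lam →
      u (x₂ + lam • (x - x₂)) = (lam ^ α₂) • u x) :
    α₁ = α₂ ∧ ∀ (x : E3) (t : ℝ), u (x + t • (x₂ - x₁)) = u x := by
  have key1 : ∀ (x : E3) (lam : ℝ), 0 < lam →
      u (x + (1 - lam⁻¹) • (x₂ - x₁)) = (lam ^ (α₁ - α₂)) • u x := by
    intro x lam hlam
    have h2' := h2 (x₁ + lam • (x - x₁)) lam⁻¹ (by positivity)
    rw [h1 x lam hlam] at h2'
    have hpt : x₂ + lam⁻¹ • (x₁ + lam • (x - x₁) - x₂)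
        = x + (1 - lam⁻¹) • (x₂ - x₁) := by
      have hlam' : lam ≠ 0 := hlam.ne'
      match_scalars <;> field_simp <;> ring
    rw [hpt] at h2'
    rw [h2', smul_smul]
    congr 1
    rw [Real.inv_rpow hlam.le, ← Real.rpow_neg hlam.le, ← Real.rpow_add hlam]
    ring_nf
  have key2 : ∀ (x : E3) (lam : ℝ), 0 < lam →
      u (x + (1 - lam⁻¹) • (x₁ - x₂)) = (lam ^ (α₂ - α₁)) • u x := by
    intro x lam hlam
    have h1' := h1 (x₂ + lam • (x - x₂)) lam⁻¹ (by positivity)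
    rw [h2 x lam hlam] at h1'
    have hpt : x₁ + lam⁻¹ • (x₂ + lam • (x - x₂) - x₁)
        = x + (1 - lam⁻¹) • (x₁ - x₂) := by
      have hlam' : lam ≠ 0 := hlam.ne'
      match_scalars <;> field_simp <;> ring
    rw [hpt] at h1'
    rw [h1', smul_smul]
    congr 1
    rw [Real.inv_rpow hlam.le, ← Real.rpow_neg hlam.le, ← Real.rpow_add hlam]
    ring_nf
  obtain ⟨x₀, hx₀⟩ := hnontriv
  set β := α₁ - α₂ with hβ
  have e1 := key1 x₀ 2 (by norm_num)
  have e2 := key2 x₀ (2/3) (by norm_num)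
  have hh : (1 : ℝ) - 2⁻¹ = 1/2 := by norm_num
  have hh2 : (1 : ℝ) - (2/3)⁻¹ = -(1/2) := by norm_num
  rw [hh] at e1
  rw [hh2] at e2
  have hdir : (-(1/2) : ℝ) • (x₁ - x₂) = ((1:ℝ)/2) • (x₂ - x₁) := by
    match_scalars <;> ring
  rw [hdir] at e2
  have heq : ((2:ℝ) ^ β) • u x₀ = ((2/3 : ℝ) ^ (α₂ - α₁)) • u x₀ := by
    rw [← e1, ← e2]
  have hβ0 : β = 0 := by
    have hsc : (2:ℝ) ^ β = (2/3 : ℝ) ^ (α₂ - α₁) := by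
      by_contra hc
      have := sub_smul ((2:ℝ) ^ β) ((2/3 : ℝ) ^ (α₂ - α₁)) (u x₀)
      rw [heq, sub_self] at this
      rcases smul_eq_zero.mp this with h | h
      · exact hc (sub_eq_zero.mp h)
      · exact hx₀ h
    have h23 : (2/3 : ℝ) ^ (α₂ - α₁) = ((3/2 : ℝ)) ^ β := by
      have : (2/3 : ℝ) = (3/2 : ℝ)⁻¹ := by norm_num
      rw [this, Real.inv_rpow (by norm_num), ← Real.rpow_neg (by norm_num)]
      congr 1
      simp [hβ]
    rw [h23] at hsc
    have hlog : β * Real.log 2 = β * Real.log (3/2) := by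
      have l1 : Real.log ((2:ℝ) ^ β) = β * Real.log 2 := Real.log_rpow (by norm_num) β
      have l2 : Real.log ((3/2:ℝ) ^ β) = β * Real.log (3/2) := Real.log_rpow (by norm_num) β
      rw [← l1, ← l2, hsc]
    have hlt : Real.log (3/2) < Real.log 2 := Real.log_lt_log (by norm_num) (by norm_num)
    have hz : β * (Real.log 2 - Real.log (3/2)) = 0 := by linear_combination hlog
    rcases mul_eq_zero.mp hz with h | h
    · exact h
    · exact absurd h (sub_ne_zero.mpr hlt.ne')
  have hαeq : α₁ = α₂ := by linarith [hβ0, hβ ▸ hβ0]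
  refine ⟨hαeq, fun x t => ?_⟩
  rcases lt_or_ge t 1 with ht | ht
  · have hlam : (0:ℝ) < (1 - t)⁻¹ := by
      have : (0:ℝ) < 1 - t := by linarith
      positivity
    have := key1 x ((1 - t)⁻¹) hlam
    rw [inv_inv] at this
    have ht' : 1 - (1 - t) = t := by ring
    rw [ht', hβ0, Real.rpow_zero, one_smul] at this
    exact this
  · have hpos : (0:ℝ) < 1 + t := by linarith
    have hlam : (0:ℝ) < (1 + t)⁻¹ := by positivity
    have := key2 x ((1 + t)⁻¹) hlam
    rw [inv_inv] at this
    have ht' : (1 - (1 + t)) • (x₁ - x₂) = t • (x₂ - x₁) := by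
      match_scalars <;> ring
    rw [ht'] at this
    have hβ0' : α₂ - α₁ = 0 := by linarith [hαeq]
    rw [this, hβ0', Real.rpow_zero, one_smul]
end
end
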